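/- arXiv:2106.11194 — 8 statements merged into one kernel-verified Lean document; each statement's English description precedes it below -/
import Mathlib

section
/- (Permanence, Theorem 2.1.) Assume p := Σ_{j=1}^m p_j > δ and let K > 0 be the unique number with Σ_j p_j e^{−a_j K} = δ. Then every solution x of the Nicholson equation defined on [t₀−τ, ∞) with admissible initial data satisfies K e^{−2δβ⁺τ} ≤ liminf_{t→∞} x(t) ≤ limsup_{t→∞} x(t) ≤ K e^{2(δ+p)β⁺τ}. In particular the equation is permanent: all such solutions are eventually bounded between fixed positive constants. -/
open Set Filter Real Topology

namespace NicholsonAux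

/-- Derivative comparison from the right along a set approaching `t1`. -/
lemma deriv_le_deriv_right {f g : ℝ → ℝ} {f' g' t1 : ℝ} {s E : Set ℝ}
    (hf : HasDerivWithinAt f f' s t1) (hg : HasDerivWithinAt g g' s t1)
    (hE : E ⊆ s) (hgt : ∀ e ∈ E, t1 < e) (hcl : t1 ∈ closure E)
    (hle : ∀ e ∈ E, g e ≤ f e) (heq : g t1 = f t1) : g' ≤ f' := by
  have hne : (𝓝[E] t1).NeBot := mem_closure_iff_nhdsWithin_neBot.1 hcl
  have hEs : E ⊆ s \ {t1} := fun e he => ⟨hE he, by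
    simp only [mem_singleton_iff]; exact (hgt e he).ne'⟩
  have hmono : 𝓝[E] t1 ≤ 𝓝[s \ {t1}] t1 := nhdsWithin_mono _ hEs
  have h1 : Tendsto (slope f t1) (𝓝[E] t1) (𝓝 f') :=
    (hasDerivWithinAt_iff_tendsto_slope.1 hf).mono_left hmono
  have h2 : Tendsto (slope g t1) (𝓝[E] t1) (𝓝 g') :=
    (hasDerivWithinAt_iff_tendsto_slope.1 hg).mono_left hmono
  refine le_of_tendsto_of_tendsto h2 h1 ?_
  filter_upwards [self_mem_nhdsWithin] with e he
  have h3 : (0:ℝ) < e - t1 := sub_pos.2 (hgt e he)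
  simp only [slope_def_field]
  rw [div_le_div_iff_of_pos_right h3]
  have := hle e he
  linarith [heq]

/-- Derivative comparison from the left along a set approaching `t1`. -/
lemma deriv_le_deriv_left {f g : ℝ → ℝ} {f' g' t1 : ℝ} {s E : Set ℝ}
    (hf : HasDerivWithinAt f f' s t1) (hg : HasDerivWithinAt g g' s t1)
    (hE : E ⊆ s) (hlt : ∀ e ∈ E, e < t1) (hcl : t1 ∈ closure E)
    (hle : ∀ e ∈ E, f e ≤ g e) (heq : f t1 = g t1) : g' ≤ f' := by
  have hne : (𝓝[E] t1).NeBot := mem_closure_iff_nhdsWithin_neBot.1 hcl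
  have hEs : E ⊆ s \ {t1} := fun e he => ⟨hE he, by
    simp only [mem_singleton_iff]; exact (hlt e he).ne⟩
  have hmono : 𝓝[E] t1 ≤ 𝓝[s \ {t1}] t1 := nhdsWithin_mono _ hEs
  have h1 : Tendsto (slope f t1) (𝓝[E] t1) (𝓝 f') :=
    (hasDerivWithinAt_iff_tendsto_slope.1 hf).mono_left hmono
  have h2 : Tendsto (slope g t1) (𝓝[E] t1) (𝓝 g') :=
    (hasDerivWithinAt_iff_tendsto_slope.1 hg).mono_left hmono
  refine le_of_tendsto_of_tendsto h2 h1 ?_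
  filter_upwards [self_mem_nhdsWithin] with e he
  have h3 : e - t1 < (0:ℝ) := sub_neg.2 (hlt e he)
  rw [slope_def_field, slope_def_field, div_le_div_right_of_neg h3]
  have := hle e he
  linarith [heq]

end NicholsonAux

namespace NicholsonAux

/-- Context for the Nicholson equation with all standing hypotheses. -/
structure NC where
  m : ℕ
  hm : 1 ≤ m
  p : Fin m → ℝ
  a : Fin m → ℝ
  hp : ∀ j, 0 < p j
  ha : ∀ j, 0 < a j
  δ : ℝ
  hδ : 0 < δ
  t₀ : ℝ
  β : ℝ → ℝ
  τ : Fin m → ℝ → ℝ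
  σ : Fin m → ℝ → ℝ
  b : ℝ
  B : ℝ
  hb : 0 < b
  hβl : ∀ t, t₀ ≤ t → b ≤ β t
  hβu : ∀ t, t₀ ≤ t → β t ≤ B
  τbar : ℝ
  hτbar0 : 0 ≤ τbar
  hτu : ∀ j t, t₀ ≤ t → τ j t ≤ τbar
  hσu : ∀ j t, t₀ ≤ t → σ j t ≤ τbar
  hτ0 : ∀ j t, t₀ ≤ t → 0 ≤ τ j t
  hσ0 : ∀ j t, t₀ ≤ t → 0 ≤ σ j t
  hpδ : δ < ∑ j, p j
  K : ℝ
  hK0 : 0 < K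
  hKeq : ∑ j, p j * Real.exp (-(a j) * K) = δ
  x : ℝ → ℝ
  hxc : ContinuousOn x (Set.Ici (t₀ - τbar))
  hder : ∀ t, t₀ ≤ t → HasDerivWithinAt x
      (β t * ((∑ j, p j * x (t - τ j t) * Real.exp (-(a j) * x (t - σ j t))) - δ * x t))
      (Set.Ici t₀) t
  hinit : ∀ s, t₀ - τbar ≤ s → s < t₀ → 0 ≤ x s
  hx0 : 0 < x t₀

namespace NC

variable (c : NC)

/-- total reproduction rate -/
def P : ℝ := ∑ j, c.p j

/-- the delayed production sum -/
noncomputable def S (t : ℝ) : ℝ := ∑ j, c.p j * c.x (t - c.τ j t) * Real.exp (-(c.a j) * c.x (t - c.σ j t))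

/-- the right-hand side of the ODE -/
noncomputable def D (t : ℝ) : ℝ := c.β t * (c.S t - c.δ * c.x t)

/-- the equilibrium function -/
noncomputable def phi (u : ℝ) : ℝ := ∑ j, c.p j * Real.exp (-(c.a j) * u)

lemma hasDeriv : ∀ t, c.t₀ ≤ t → HasDerivWithinAt c.x (c.D t) (Set.Ici c.t₀) t :=
  c.hder

lemma hB0 : 0 < c.B :=
  lt_of_lt_of_le c.hb (le_trans (c.hβl c.t₀ le_rfl) (c.hβu c.t₀ le_rfl))

lemma hbB : c.b ≤ c.B := le_trans (c.hβl c.t₀ le_rfl) (c.hβu c.t₀ le_rfl)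

lemma hP0 : 0 < c.P := lt_trans c.hδ c.hpδ

lemma hδP : c.δ < c.P := c.hpδ

lemma ht₀τ : c.t₀ - c.τbar ≤ c.t₀ := by linarith [c.hτbar0]

lemma τarg_mem {j : Fin c.m} {t : ℝ} (ht : c.t₀ ≤ t) :
    c.t₀ - c.τbar ≤ t - c.τ j t ∧ t - c.τ j t ≤ t :=
  ⟨by have := c.hτu j t ht; linarith, by have := c.hτ0 j t ht; linarith⟩

lemma σarg_mem {j : Fin c.m} {t : ℝ} (ht : c.t₀ ≤ t) :
    c.t₀ - c.τbar ≤ t - c.σ j t ∧ t - c.σ j t ≤ t :=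
  ⟨by have := c.hσu j t ht; linarith, by have := c.hσ0 j t ht; linarith⟩

lemma phiK : c.phi c.K = c.δ := c.hKeq

lemma phi_lt_phi {u v : ℝ} (h : u < v) : c.phi v < c.phi u := by
  have : Nonempty (Fin c.m) := ⟨⟨0, c.hm⟩⟩
  refine Finset.sum_lt_sum_of_nonempty Finset.univ_nonempty fun j _ => ?_
  have haj := c.ha j
  have h2 : -(c.a j) * v < -(c.a j) * u := by nlinarith
  exact mul_lt_mul_of_pos_left (Real.exp_lt_exp.2 h2) (c.hp j)

lemma K_le_of_phi_le {u : ℝ} (h : c.phi u ≤ c.δ) : c.K ≤ u := by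
  by_contra hu
  push_neg at hu
  have := c.phi_lt_phi hu
  rw [c.phiK] at this
  linarith

lemma phi_pos (u : ℝ) : 0 < c.phi u := by
  have : Nonempty (Fin c.m) := ⟨⟨0, c.hm⟩⟩
  refine Finset.sum_pos (fun j _ => ?_) Finset.univ_nonempty
  exact mul_pos (c.hp j) (Real.exp_pos _)

end NC

end NicholsonAux

/-- A solution of the Nicholson equation
`x'(t) = β(t)(Σ_j p_j x(t−τ_j(t)) e^{−a_j x(t−σ_j(t))} − δ x(t))`, `t ≥ t₀`,
defined on `[t₀ − τbar, ∞)`, with admissible initial data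
(`x ≥ 0` on `[t₀ − τbar, t₀)` and `x(t₀) > 0`). -/
def NicholsonSolution (m : ℕ) (p a : Fin m → ℝ) (δ t₀ τbar : ℝ)
    (β : ℝ → ℝ) (τ σ : Fin m → ℝ → ℝ) (x : ℝ → ℝ) : Prop :=
  ContinuousOn x (Set.Ici (t₀ - τbar)) ∧
  (∀ t ∈ Set.Ici t₀, HasDerivWithinAt x
      (β t * ((∑ j, p j * x (t - τ j t) * Real.exp (-(a j) * x (t - σ j t))) - δ * x t))
      (Set.Ici t₀) t) ∧
  (∀ s, t₀ - τbar ≤ s → s < t₀ → 0 ≤ x s) ∧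
  0 < x t₀

namespace NicholsonAux
namespace NC

variable (c : NC)

lemma nonneg_Ici : ∀ t, c.t₀ ≤ t → 0 ≤ c.x t := by
  by_contra hcon
  push_neg at hcon
  obtain ⟨t1, ht1, hneg⟩ := hcon
  set U : Set ℝ := Icc c.t₀ t1 ∩ c.x ⁻¹' (Iic 0) with hU
  have hIccsub : Icc c.t₀ t1 ⊆ Ici (c.t₀ - c.τbar) := fun s hs => le_trans c.ht₀τ hs.1
  have hUclosed : IsClosed U :=
    (c.hxc.mono hIccsub).preimage_isClosed_of_isClosed isClosed_Icc isClosed_Iic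
  have hUne : U.Nonempty := ⟨t1, ⟨⟨ht1, le_rfl⟩, le_of_lt hneg⟩⟩
  have hUbdd : BddBelow U := (bddBelow_Icc (a := t1) (b := c.t₀)).mono inter_subset_left
  set c₀ := sInf U with hc₀def
  have hc₀U : c₀ ∈ U := hUclosed.csInf_mem hUne hUbdd
  obtain ⟨⟨hc₀l, hc₀r⟩, hc₀x⟩ := hc₀U
  have hc₀x : c.x c₀ ≤ 0 := hc₀x
  have ht₀c₀ : c.t₀ < c₀ := lt_of_le_of_ne hc₀l (by
    intro heq; rw [← heq] at hc₀x; exact absurd hc₀x (not_le.2 c.hx0))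
  have hbefore : ∀ s, c.t₀ ≤ s → s < c₀ → 0 < c.x s := by
    intro s hs hsc
    by_contra hxs
    push_neg at hxs
    have hsU : s ∈ U := ⟨⟨hs, le_trans hsc.le hc₀r⟩, hxs⟩
    exact absurd (csInf_le hUbdd hsU) (not_le.2 hsc)
  have hnn : ∀ r, c.t₀ - c.τbar ≤ r → r < c₀ → 0 ≤ c.x r := by
    intro r hr hrc
    rcases lt_or_ge r c.t₀ with h | h
    · exact c.hinit r hr h
    · exact (hbefore r h hrc).le
  set A := c.δ * c.B with hA
  set y : ℝ → ℝ := fun s => c.x s * Real.exp (A * s) with hy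
  have hyd : ∀ s ∈ Ioo c.t₀ c₀, HasDerivAt y ((c.D s + A * c.x s) * Real.exp (A * s)) s := by
    intro s hs
    have hx' : HasDerivAt c.x (c.D s) s :=
      (c.hasDeriv s hs.1.le).hasDerivAt (Ici_mem_nhds hs.1)
    have hexp : HasDerivAt (fun s : ℝ => Real.exp (A * s)) (Real.exp (A * s) * A) s := by
      simpa using (((hasDerivAt_id s).const_mul A)).exp
    have h2 := hx'.mul hexp
    exact h2.congr_deriv (by ring)
  have hmono : MonotoneOn y (Icc c.t₀ c₀) := by
    apply monotoneOn_of_deriv_nonneg (convex_Icc _ _)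
    · exact ((c.hxc.mono hIccsub).mono (Icc_subset_Icc_right hc₀r)).mul
        ((Real.continuous_exp.comp (continuous_const.mul continuous_id)).continuousOn)
    · intro s hs
      rw [interior_Icc] at hs
      exact (hyd s hs).differentiableAt.differentiableWithinAt
    · intro s hs
      rw [interior_Icc] at hs
      rw [(hyd s hs).deriv]
      have hs0 : c.t₀ ≤ s := hs.1.le
      have hxs : 0 ≤ c.x s := hnn s (le_trans c.ht₀τ hs0) hs.2
      have hS : 0 ≤ c.S s := by
        apply Finset.sum_nonneg
        intro j _
        have harg := (c.τarg_mem (j := j) hs0)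
        have hxτ : 0 ≤ c.x (s - c.τ j s) := hnn _ harg.1 (lt_of_le_of_lt harg.2 hs.2)
        exact mul_nonneg (mul_nonneg (c.hp j).le hxτ) (Real.exp_pos _).le
      have hβs : 0 ≤ c.β s := le_trans c.hb.le (c.hβl s hs0)
      have hβB : c.β s ≤ c.B := c.hβu s hs0
      have hDlow : 0 ≤ c.D s + A * c.x s := by
        have h1 : c.β s * (c.δ * c.x s) ≤ c.B * (c.δ * c.x s) :=
          mul_le_mul_of_nonneg_right hβB (mul_nonneg c.hδ.le hxs)
        have h2 : 0 ≤ c.β s * c.S s := mul_nonneg hβs hS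
        have hD : c.D s = c.β s * c.S s - c.β s * (c.δ * c.x s) := by rw [D]; ring
        rw [hD, hA]
        nlinarith
      exact mul_nonneg hDlow (Real.exp_pos _).le
  have h1 : y c.t₀ ≤ y c₀ := hmono ⟨le_rfl, ht₀c₀.le⟩ ⟨ht₀c₀.le, le_rfl⟩ ht₀c₀.le
  have h2 : 0 < y c.t₀ := mul_pos c.hx0 (Real.exp_pos _)
  have h3 : y c₀ ≤ 0 := by
    have := Real.exp_pos (A * c₀)
    simp only [hy]
    nlinarith
  linarith

lemma nonneg : ∀ t, c.t₀ - c.τbar ≤ t → 0 ≤ c.x t := by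
  intro t ht
  rcases lt_or_ge t c.t₀ with h | h
  · exact c.hinit t ht h
  · exact c.nonneg_Ici t h

lemma S_nonneg {t : ℝ} (ht : c.t₀ ≤ t) : 0 ≤ c.S t := by
  apply Finset.sum_nonneg
  intro j _
  have harg := (c.τarg_mem (j := j) ht)
  exact mul_nonneg (mul_nonneg (c.hp j).le (c.nonneg _ harg.1)) (Real.exp_pos _).le

lemma ymono : MonotoneOn (fun s => c.x s * Real.exp (c.δ * c.B * s)) (Ici c.t₀) := by
  set A := c.δ * c.B with hA
  set y : ℝ → ℝ := fun s => c.x s * Real.exp (A * s) with hy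
  have hyd : ∀ s ∈ Ioi c.t₀, HasDerivAt y ((c.D s + A * c.x s) * Real.exp (A * s)) s := by
    intro s hs
    have hx' : HasDerivAt c.x (c.D s) s :=
      (c.hasDeriv s (le_of_lt hs)).hasDerivAt (Ici_mem_nhds hs)
    have hexp : HasDerivAt (fun s : ℝ => Real.exp (A * s)) (Real.exp (A * s) * A) s := by
      simpa using (((hasDerivAt_id s).const_mul A)).exp
    have h2 := hx'.mul hexp
    exact h2.congr_deriv (by ring)
  apply monotoneOn_of_deriv_nonneg (convex_Ici _)
  · exact (c.hxc.mono (Ici_subset_Ici.2 c.ht₀τ)).mul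
      ((Real.continuous_exp.comp (continuous_const.mul continuous_id)).continuousOn)
  · intro s hs
    rw [interior_Ici] at hs
    exact (hyd s hs).differentiableAt.differentiableWithinAt
  · intro s hs
    rw [interior_Ici] at hs
    rw [(hyd s hs).deriv]
    have hs0 : c.t₀ ≤ s := (le_of_lt hs)
    have hxs : 0 ≤ c.x s := c.nonneg_Ici s hs0
    have hS : 0 ≤ c.S s := c.S_nonneg hs0
    have hβs : 0 ≤ c.β s := le_trans c.hb.le (c.hβl s hs0)
    have hβB : c.β s ≤ c.B := c.hβu s hs0
    have hDlow : 0 ≤ c.D s + A * c.x s := by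
      have h1 : c.β s * (c.δ * c.x s) ≤ c.B * (c.δ * c.x s) :=
        mul_le_mul_of_nonneg_right hβB (mul_nonneg c.hδ.le hxs)
      have h2 : 0 ≤ c.β s * c.S s := mul_nonneg hβs hS
      have hD : c.D s = c.β s * c.S s - c.β s * (c.δ * c.x s) := by rw [D]; ring
      rw [hD, hA]
      nlinarith
    exact mul_nonneg hDlow (Real.exp_pos _).le

/-- the key one-sided Gronwall estimate: earlier values are controlled by later ones. -/
lemma grow {s t : ℝ} (hs : c.t₀ ≤ s) (hst : s ≤ t) :
    c.x s ≤ c.x t * Real.exp (c.δ * c.B * (t - s)) := by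
  have h := c.ymono (mem_Ici.2 hs) (mem_Ici.2 (hs.trans hst)) hst
  have hepos := Real.exp_pos (c.δ * c.B * s)
  have h2 : c.x s ≤ c.x t * Real.exp (c.δ * c.B * t) / Real.exp (c.δ * c.B * s) := by
    rw [le_div_iff₀ hepos]; exact h
  have h3 : Real.exp (c.δ*c.B*t) / Real.exp (c.δ*c.B*s) = Real.exp (c.δ*c.B*(t-s)) := by
    rw [← Real.exp_sub]; ring_nf
  rw [mul_div_assoc, h3] at h2
  exact h2

lemma pos {t : ℝ} (ht : c.t₀ ≤ t) : 0 < c.x t := by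
  have h := c.grow le_rfl ht
  have he := Real.exp_pos (c.δ * c.B * (t - c.t₀))
  nlinarith [c.hx0]

end NC
end NicholsonAux
namespace NicholsonAux
namespace NC

variable (c : NC)

lemma exp_term_le_one {t : ℝ} (ht : c.t₀ ≤ t) (j : Fin c.m) :
    Real.exp (-(c.a j) * c.x (t - c.σ j t)) ≤ 1 := by
  rw [Real.exp_le_one_iff]
  have h1 : 0 ≤ c.x (t - c.σ j t) := c.nonneg _ (c.σarg_mem ht).1
  have := (c.ha j).le
  nlinarith

lemma S_le {t V : ℝ} (ht : c.t₀ ≤ t) (hV : ∀ j, c.x (t - c.τ j t) ≤ V) :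
    c.S t ≤ c.P * V := by
  rw [S, P, Finset.sum_mul]
  apply Finset.sum_le_sum
  intro j _
  have hxτ : 0 ≤ c.x (t - c.τ j t) := c.nonneg _ (c.τarg_mem ht).1
  have he1 : Real.exp (-(c.a j) * c.x (t - c.σ j t)) ≤ 1 := c.exp_term_le_one ht j
  have hep : (0:ℝ) < Real.exp (-(c.a j) * c.x (t - c.σ j t)) := Real.exp_pos _
  have hpj := (c.hp j).le
  calc c.p j * c.x (t - c.τ j t) * Real.exp (-(c.a j) * c.x (t - c.σ j t))
      ≤ c.p j * c.x (t - c.τ j t) * 1 :=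
        mul_le_mul_of_nonneg_left he1 (mul_nonneg hpj hxτ)
    _ = c.p j * c.x (t - c.τ j t) := mul_one _
    _ ≤ c.p j * V := mul_le_mul_of_nonneg_left (hV j) hpj

lemma S_lt_phi {t V K' : ℝ} (ht : c.t₀ ≤ t) (hV0 : 0 < V)
    (hV : ∀ j, c.x (t - c.τ j t) ≤ V) (hσ : ∀ j, K' < c.x (t - c.σ j t)) :
    c.S t < V * c.phi K' := by
  have : Nonempty (Fin c.m) := ⟨⟨0, c.hm⟩⟩
  rw [S, phi, Finset.mul_sum]
  refine Finset.sum_lt_sum_of_nonempty Finset.univ_nonempty fun j _ => ?_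
  have hxτ : 0 ≤ c.x (t - c.τ j t) := c.nonneg _ (c.τarg_mem ht).1
  have hep : (0:ℝ) < Real.exp (-(c.a j) * c.x (t - c.σ j t)) := Real.exp_pos _
  have hpj := c.hp j
  have hstep : Real.exp (-(c.a j) * c.x (t - c.σ j t)) < Real.exp (-(c.a j) * K') := by
    apply Real.exp_lt_exp.2
    have := c.ha j
    nlinarith [hσ j]
  calc c.p j * c.x (t - c.τ j t) * Real.exp (-(c.a j) * c.x (t - c.σ j t))
      ≤ c.p j * V * Real.exp (-(c.a j) * c.x (t - c.σ j t)) :=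
        mul_le_mul_of_nonneg_right (mul_le_mul_of_nonneg_left (hV j) hpj.le) hep.le
    _ < c.p j * V * Real.exp (-(c.a j) * K') := by
        apply mul_lt_mul_of_pos_left hstep (by positivity)
    _ = V * (c.p j * Real.exp (-(c.a j) * K')) := by ring

lemma S_ge {t w u : ℝ} (ht : c.t₀ ≤ t) (hw0 : 0 ≤ w)
    (hw : ∀ j, w ≤ c.x (t - c.τ j t)) (hu : ∀ j, c.x (t - c.σ j t) ≤ u) :
    w * c.phi u ≤ c.S t := by
  rw [S, phi, Finset.mul_sum]
  apply Finset.sum_le_sum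
  intro j _
  have hpj := (c.hp j).le
  have hestep : Real.exp (-(c.a j) * u) ≤ Real.exp (-(c.a j) * c.x (t - c.σ j t)) := by
    apply Real.exp_le_exp.2
    have := (c.ha j).le
    nlinarith [hu j]
  have hep : (0:ℝ) < Real.exp (-(c.a j) * u) := Real.exp_pos _
  have hxτ : 0 ≤ c.x (t - c.τ j t) := c.nonneg _ (c.τarg_mem ht).1
  have h1 : w * Real.exp (-(c.a j) * u) ≤
      c.x (t - c.τ j t) * Real.exp (-(c.a j) * c.x (t - c.σ j t)) :=
    mul_le_mul (hw j) hestep hep.le hxτ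
  calc w * (c.p j * Real.exp (-(c.a j) * u)) = c.p j * (w * Real.exp (-(c.a j) * u)) := by ring
    _ ≤ c.p j * (c.x (t - c.τ j t) * Real.exp (-(c.a j) * c.x (t - c.σ j t))) :=
        mul_le_mul_of_nonneg_left h1 hpj
    _ = c.p j * c.x (t - c.τ j t) * Real.exp (-(c.a j) * c.x (t - c.σ j t)) := by ring

/-- At the first time `x` reaches `lam` from below, the derivative is nonnegative. -/
lemma first_hit_ge {T t1 lam : ℝ} (hT : c.t₀ ≤ T) (hTt1 : T ≤ t1)
    (hxT : c.x T < lam) (hx1 : lam ≤ c.x t1) :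
    ∃ ts, T < ts ∧ ts ≤ t1 ∧ c.x ts = lam ∧
      (∀ s, T ≤ s → s < ts → c.x s < lam) ∧ 0 ≤ c.D ts := by
  set U : Set ℝ := Icc T t1 ∩ c.x ⁻¹' (Ici lam) with hU
  have hsub : Icc T t1 ⊆ Ici (c.t₀ - c.τbar) := fun s hs => le_trans (le_trans c.ht₀τ hT) hs.1
  have hUclosed : IsClosed U :=
    (c.hxc.mono hsub).preimage_isClosed_of_isClosed isClosed_Icc isClosed_Ici
  have hUne : U.Nonempty := ⟨t1, ⟨⟨hTt1, le_rfl⟩, hx1⟩⟩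
  have hUbdd : BddBelow U := (bddBelow_Icc (a := t1) (b := T)).mono inter_subset_left
  set ts := sInf U with hts
  have htsU : ts ∈ U := hUclosed.csInf_mem hUne hUbdd
  obtain ⟨⟨htsl, htsr⟩, htsx⟩ := htsU
  have htsx : lam ≤ c.x ts := htsx
  have hTts : T < ts := lt_of_le_of_ne htsl (by
    intro heq; rw [← heq] at htsx; exact absurd htsx (not_le.2 hxT))
  have hbefore : ∀ s, T ≤ s → s < ts → c.x s < lam := by
    intro s hs hsts
    by_contra hxs
    push_neg at hxs
    have hsU : s ∈ U := ⟨⟨hs, le_trans hsts.le htsr⟩, hxs⟩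
    exact absurd (csInf_le hUbdd hsU) (not_le.2 hsts)
  -- the value at ts is exactly lam
  have hclo : ts ∈ closure (Ioo T ts) := by
    rw [closure_Ioo hTts.ne]; exact ⟨hTts.le, le_rfl⟩
  have hne : (𝓝[Ioo T ts] ts).NeBot := mem_closure_iff_nhdsWithin_neBot.1 hclo
  have hIoosub : Ioo T ts ⊆ Ici (c.t₀ - c.τbar) := fun s hs =>
    le_trans (le_trans c.ht₀τ hT) hs.1.le
  have hxcont : Tendsto c.x (𝓝[Ioo T ts] ts) (𝓝 (c.x ts)) := by
    have h1 : ContinuousWithinAt c.x (Ici (c.t₀ - c.τbar)) ts :=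
      c.hxc ts (le_trans (le_trans c.ht₀τ hT) (le_of_lt hTts))
    exact h1.tendsto.mono_left (nhdsWithin_mono _ hIoosub)
  have hxts_le : c.x ts ≤ lam :=
    le_of_tendsto hxcont (by
      filter_upwards [self_mem_nhdsWithin] with e he
      exact (hbefore e he.1.le he.2).le)
  have hxeq : c.x ts = lam := le_antisymm hxts_le htsx
  refine ⟨ts, hTts, htsr, hxeq, hbefore, ?_⟩
  -- derivative sign
  have hderiv := c.hasDeriv ts (le_trans hT hTts.le)
  have hconst : HasDerivWithinAt (fun _ : ℝ => lam) 0 (Ici c.t₀) ts := hasDerivWithinAt_const _ _ _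
  refine deriv_le_deriv_left hderiv hconst (fun e he => le_trans hT he.1.le)
    (fun e he => he.2) hclo (fun e he => (hbefore e he.1.le he.2).le) hxeq
/-- At the first time `x` reaches `lam` from above, the derivative is nonpositive. -/
lemma first_hit_le {T t1 lam : ℝ} (hT : c.t₀ ≤ T) (hTt1 : T ≤ t1)
    (hxT : lam < c.x T) (hx1 : c.x t1 ≤ lam) :
    ∃ ts, T < ts ∧ ts ≤ t1 ∧ c.x ts = lam ∧
      (∀ s, T ≤ s → s < ts → lam < c.x s) ∧ c.D ts ≤ 0 := by
  set U : Set ℝ := Icc T t1 ∩ c.x ⁻¹' (Iic lam) with hU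
  have hsub : Icc T t1 ⊆ Ici (c.t₀ - c.τbar) := fun s hs => le_trans (le_trans c.ht₀τ hT) hs.1
  have hUclosed : IsClosed U :=
    (c.hxc.mono hsub).preimage_isClosed_of_isClosed isClosed_Icc isClosed_Iic
  have hUne : U.Nonempty := ⟨t1, ⟨⟨hTt1, le_rfl⟩, hx1⟩⟩
  have hUbdd : BddBelow U := (bddBelow_Icc (a := t1) (b := T)).mono inter_subset_left
  set ts := sInf U with hts
  have htsU : ts ∈ U := hUclosed.csInf_mem hUne hUbdd
  obtain ⟨⟨htsl, htsr⟩, htsx⟩ := htsU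
  have htsx : c.x ts ≤ lam := htsx
  have hTts : T < ts := lt_of_le_of_ne htsl (by
    intro heq; rw [← heq] at htsx; exact absurd htsx (not_le.2 hxT))
  have hbefore : ∀ s, T ≤ s → s < ts → lam < c.x s := by
    intro s hs hsts
    by_contra hxs
    push_neg at hxs
    have hsU : s ∈ U := ⟨⟨hs, le_trans hsts.le htsr⟩, hxs⟩
    exact absurd (csInf_le hUbdd hsU) (not_le.2 hsts)
  have hclo : ts ∈ closure (Ioo T ts) := by
    rw [closure_Ioo hTts.ne]; exact ⟨hTts.le, le_rfl⟩
  have hne : (𝓝[Ioo T ts] ts).NeBot := mem_closure_iff_nhdsWithin_neBot.1 hclo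
  have hIoosub : Ioo T ts ⊆ Ici (c.t₀ - c.τbar) := fun s hs =>
    le_trans (le_trans c.ht₀τ hT) hs.1.le
  have hxcont : Tendsto c.x (𝓝[Ioo T ts] ts) (𝓝 (c.x ts)) := by
    have h1 : ContinuousWithinAt c.x (Ici (c.t₀ - c.τbar)) ts :=
      c.hxc ts (le_trans (le_trans c.ht₀τ hT) (le_of_lt hTts))
    exact h1.tendsto.mono_left (nhdsWithin_mono _ hIoosub)
  have hxts_ge : lam ≤ c.x ts :=
    ge_of_tendsto hxcont (by
      filter_upwards [self_mem_nhdsWithin] with e he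
      exact (hbefore e he.1.le he.2).le)
  have hxeq : c.x ts = lam := le_antisymm htsx hxts_ge
  refine ⟨ts, hTts, htsr, hxeq, hbefore, ?_⟩
  have hderiv := c.hasDeriv ts (le_trans hT hTts.le)
  have hconst : HasDerivWithinAt (fun _ : ℝ => lam) 0 (Ici c.t₀) ts := hasDerivWithinAt_const _ _ _
  refine deriv_le_deriv_left hconst hderiv (fun e he => le_trans hT he.1.le)
    (fun e he => he.2) hclo (fun e he => (hbefore e he.1.le he.2).le) hxeq.symm

end NC
end NicholsonAux
namespace NicholsonAux
namespace NC

variable (c : NC)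

set_option maxHeartbeats 1000000 in
/-- Forward growth estimate: if `x ≤ M` on a window of length `τbar` ending at `a'`,
then beyond `a'` the solution grows at most at exponential rate `B * P`. -/
lemma gro {a' M : ℝ} (ha : c.t₀ ≤ a') (hM : 0 < M)
    (hw : ∀ r, a' - c.τbar ≤ r → r ≤ a' → c.x r ≤ M) :
    ∀ t, a' ≤ t → c.x t ≤ M * Real.exp (c.B * c.P * (t - a')) := by
  set cc := c.B * c.P with hcc
  have hcc0 : 0 < cc := mul_pos c.hB0 c.hP0
  set g : ℝ → ℝ := fun t => M * Real.exp (cc * (t - a')) with hg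
  by_contra hcon
  push_neg at hcon
  obtain ⟨t2, ht2, hgt2⟩ := hcon
  set E : Set ℝ := {t | a' ≤ t ∧ g t < c.x t} with hE
  have hEne : E.Nonempty := ⟨t2, ht2, hgt2⟩
  have hEbdd : BddBelow E := ⟨a', fun e he => he.1⟩
  set t1 := sInf E with ht1def
  have ht1l : a' ≤ t1 := le_csInf hEne fun e he => he.1
  have ht1t₀ : c.t₀ ≤ t1 := le_trans ha ht1l
  have hEle : ∀ e ∈ E, t1 ≤ e := fun e he => csInf_le hEbdd he
  have ha'nE : a' ∉ E := by
    intro hmem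
    have : c.x a' ≤ M := hw a' (by linarith [c.hτbar0]) le_rfl
    have hga' : g a' = M := by simp [hg]
    have h2 := hmem.2
    rw [hga'] at h2
    linarith
  have hcl : t1 ∈ closure E := csInf_mem_closure hEne hEbdd
  have hEsub : E ⊆ Ici (c.t₀ - c.τbar) := fun e he => le_trans (le_trans c.ht₀τ ht1t₀) (hEle e he)
  have hgcont : Continuous g := by continuity
  -- x t1 ≥ g t1 by closure
  have hxge : g t1 ≤ c.x t1 := by
    have hxc1 : Tendsto (fun s => c.x s - g s) (𝓝[E] t1) (𝓝 (c.x t1 - g t1)) := by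
      have h1 : ContinuousWithinAt c.x (Ici (c.t₀ - c.τbar)) t1 :=
        c.hxc t1 (le_trans c.ht₀τ ht1t₀)
      have := (h1.tendsto.mono_left (nhdsWithin_mono _ hEsub)).sub
        ((hgcont.tendsto t1).mono_left nhdsWithin_le_nhds)
      exact this
    have hne : (𝓝[E] t1).NeBot := mem_closure_iff_nhdsWithin_neBot.1 hcl
    have h0 : (0:ℝ) ≤ c.x t1 - g t1 := by
      refine ge_of_tendsto hxc1 ?_
      filter_upwards [self_mem_nhdsWithin] with e he
      linarith [he.2]
    linarith
  -- x t1 ≤ g t1 by minimality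
  have hxle : c.x t1 ≤ g t1 := by
    by_contra hgt
    push_neg at hgt
    have ht1E : t1 ∈ E := ⟨ht1l, hgt⟩
    have ha't1 : a' < t1 := lt_of_le_of_ne ht1l (by
      intro heq; rw [← heq] at ht1E; exact ha'nE ht1E)
    have hclo2 : t1 ∈ closure (Ioo a' t1) := by
      rw [closure_Ioo ha't1.ne]; exact ⟨ha't1.le, le_rfl⟩
    have hne2 : (𝓝[Ioo a' t1] t1).NeBot := mem_closure_iff_nhdsWithin_neBot.1 hclo2
    have hIoosub : Ioo a' t1 ⊆ Ici (c.t₀ - c.τbar) := fun s hs =>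
      le_trans (le_trans c.ht₀τ ha) hs.1.le
    have hcontsub : Tendsto (fun s => c.x s - g s) (𝓝[Ioo a' t1] t1) (𝓝 (c.x t1 - g t1)) := by
      have h1 : ContinuousWithinAt c.x (Ici (c.t₀ - c.τbar)) t1 :=
        c.hxc t1 (le_trans c.ht₀τ ht1t₀)
      exact (h1.tendsto.mono_left (nhdsWithin_mono _ hIoosub)).sub
        ((hgcont.tendsto t1).mono_left nhdsWithin_le_nhds)
    have hev : ∀ᶠ s in 𝓝[Ioo a' t1] t1, 0 < c.x s - g s :=
      hcontsub.eventually (eventually_gt_nhds (by linarith))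
    obtain ⟨s, hs0, hsIoo⟩ := (hev.and self_mem_nhdsWithin).exists
    have : s ∈ E := ⟨hsIoo.1.le, by linarith⟩
    exact absurd (hEle s this) (not_le.2 hsIoo.2)
  have hxeq : c.x t1 = g t1 := le_antisymm hxle hxge
  set V := g t1 with hV
  have hVM : M ≤ V := by
    have h1 : (1:ℝ) ≤ Real.exp (cc * (t1 - a')) := by
      rw [Real.one_le_exp_iff]
      nlinarith
    simp only [hV, hg]
    nlinarith
  have hV0 : 0 < V := lt_of_lt_of_le hM hVM
  have ht1nE : t1 ∉ E := by
    intro hmem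
    have h2 := hmem.2
    rw [hxeq] at h2
    exact lt_irrefl _ h2
  have hEgt : ∀ e ∈ E, t1 < e := fun e he =>
    lt_of_le_of_ne (hEle e he) (by intro heq; rw [heq] at ht1nE; exact ht1nE he)
  -- derivative of g at t1
  have hgd : HasDerivAt g (cc * V) t1 := by
    have h1 : HasDerivAt (fun t : ℝ => cc * (t - a')) cc t1 := by
      simpa using ((hasDerivAt_id t1).sub_const a').const_mul cc
    have h2 := (h1.exp).const_mul M
    exact h2.congr_deriv (by simp only [hV, hg]; ring)
  -- slope comparison
  have hkey : cc * V ≤ c.D t1 := by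
    refine deriv_le_deriv_right (c.hasDeriv t1 ht1t₀) (hgd.hasDerivWithinAt)
      (fun e he => le_trans ht1t₀ (hEle e he)) hEgt hcl
      (fun e he => (he.2).le) hxeq.symm
  -- upper bound on D t1
  have hwin : ∀ j : Fin c.m, c.x (t1 - c.τ j t1) ≤ V := by
    intro j
    set r := t1 - c.τ j t1 with hr
    have hrge : t1 - c.τbar ≤ r := by have := c.hτu j t1 ht1t₀; simp only [hr]; linarith
    have hrle : r ≤ t1 := by have := c.hτ0 j t1 ht1t₀; simp only [hr]; linarith
    rcases le_or_gt r a' with h | h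
    · exact le_trans (hw r (by linarith) h) hVM
    · rcases eq_or_lt_of_le hrle with heq | hlt
      · rw [heq, hxeq]
      · have hrnE : r ∉ E := fun hmem => absurd (hEle r hmem) (not_le.2 hlt)
        have : ¬ g r < c.x r := fun hc => hrnE ⟨h.le, hc⟩
        push_neg at this
        refine le_trans this ?_
        simp only [hg, hV]
        have : Real.exp (cc * (r - a')) ≤ Real.exp (cc * (t1 - a')) := by
          apply Real.exp_le_exp.2
          nlinarith
        nlinarith
  have hS : c.S t1 ≤ c.P * V := c.S_le ht1t₀ hwin
  have hβl := c.hβl t1 ht1t₀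
  have hβu := c.hβu t1 ht1t₀
  have hxV : c.x t1 = V := hxeq
  have hDub : c.D t1 ≤ c.B * ((c.P - c.δ) * V) := by
    rw [D, hxV]
    have h1 : c.S t1 - c.δ * V ≤ (c.P - c.δ) * V := by nlinarith
    have h2 : 0 ≤ (c.P - c.δ) * V := by nlinarith [c.hδP]
    have hβ0 : 0 ≤ c.β t1 := le_trans c.hb.le hβl
    calc c.β t1 * (c.S t1 - c.δ * V) ≤ c.β t1 * ((c.P - c.δ) * V) :=
          mul_le_mul_of_nonneg_left h1 hβ0
      _ ≤ c.B * ((c.P - c.δ) * V) := mul_le_mul_of_nonneg_right hβu h2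
  have : cc * V ≤ c.B * ((c.P - c.δ) * V) := le_trans hkey hDub
  rw [hcc] at this
  have h9 : 0 < c.B * (c.δ * V) := mul_pos c.hB0 (mul_pos c.hδ hV0)
  nlinarith [this, h9]

end NC
end NicholsonAux
namespace NicholsonAux
namespace NC

variable (c : NC)

set_option maxHeartbeats 1000000 in
/-- Global upper bound for the solution. -/
lemma global_ub : ∃ M, 0 < M ∧ ∀ t, c.t₀ - c.τbar ≤ t → c.x t ≤ M := by
  obtain ⟨q, hqmem, hqmax⟩ :=
    (isCompact_Icc (a := c.t₀ - c.τbar) (b := c.t₀ + 2*c.τbar)).exists_isMaxOn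
      (nonempty_Icc.2 (by linarith [c.hτbar0])) (c.hxc.mono (fun s hs => hs.1))
  set A := c.x q with hA
  set R := c.K * Real.exp ((c.δ*c.B + c.B*c.P) * c.τbar) with hR
  have hR0 : 0 < R := mul_pos c.hK0 (Real.exp_pos _)
  set M := max A R + 1 with hM
  have hAM : A ≤ M - 1 := by simp only [hM, add_sub_cancel_right]; exact le_max_left _ _
  have hRM : R ≤ M - 1 := by simp only [hM, add_sub_cancel_right]; exact le_max_right _ _
  have hM0 : 0 < M := by nlinarith
  refine ⟨M, hM0, ?_⟩
  intro t ht
  by_contra hcon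
  push_neg at hcon
  have hwin : ∀ s, c.t₀ - c.τbar ≤ s → s ≤ c.t₀ + 2*c.τbar → c.x s ≤ A :=
    fun s h1 h2 => hqmax ⟨h1, h2⟩
  have hT : c.t₀ ≤ c.t₀ + 2*c.τbar := by linarith [c.hτbar0]
  have hxT : c.x (c.t₀ + 2*c.τbar) < M := by
    have := hwin _ (by linarith [c.hτbar0]) le_rfl
    linarith
  have htgt : c.t₀ + 2*c.τbar ≤ t := by
    by_contra h
    push_neg at h
    have := hwin t ht h.le
    linarith
  obtain ⟨ts, hts1, hts2, htsx, htsbefore, htsD⟩ := c.first_hit_ge hT htgt hxT hcon.le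
  have htsgt : c.t₀ + 2*c.τbar < ts := hts1
  have htst₀ : c.t₀ ≤ ts := le_trans hT htsgt.le
  -- running max property
  have hrun : ∀ s, c.t₀ - c.τbar ≤ s → s ≤ ts → c.x s ≤ M := by
    intro s h1 h2
    rcases le_or_gt s (c.t₀ + 2*c.τbar) with h | h
    · have := hwin s h1 h
      linarith
    · rcases eq_or_lt_of_le h2 with heq | hlt
      · rw [heq, htsx]
      · exact (htsbefore s h.le hlt).le
  -- S ts ≥ δ M
  have hβpos : 0 < c.β ts := lt_of_lt_of_le c.hb (c.hβl ts htst₀)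
  have hSge : c.δ * M ≤ c.S ts := by
    have h5 : 0 ≤ c.S ts - c.δ * c.x ts := by
      by_contra h6
      push_neg at h6
      have : c.D ts < 0 := mul_neg_of_pos_of_neg hβpos h6
      linarith
    rw [htsx] at h5
    linarith
  -- dichotomy : some σ-delayed value is at most K
  have hdich : ∃ j : Fin c.m, c.x (ts - c.σ j ts) ≤ c.K := by
    by_contra h7
    push_neg at h7
    have hVar : ∀ j : Fin c.m, c.x (ts - c.τ j ts) ≤ M := by
      intro j
      have harg := c.τarg_mem (j := j) htst₀
      exact hrun _ harg.1 harg.2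
    have := c.S_lt_phi htst₀ hM0 hVar h7
    rw [c.phiK] at this
    nlinarith
  obtain ⟨j₀, hj₀⟩ := hdich
  set s₀ := ts - c.σ j₀ ts with hs₀
  have hs₀l : ts - c.τbar ≤ s₀ := by
    have := c.hσu j₀ ts htst₀; simp only [hs₀]; linarith
  have hs₀r : s₀ ≤ ts := by
    have := c.hσ0 j₀ ts htst₀; simp only [hs₀]; linarith
  have hs₀t₀ : c.t₀ + c.τbar ≤ s₀ := by linarith
  have hs₀t₀' : c.t₀ ≤ s₀ := by linarith [c.hτbar0]
  -- window bound before s₀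
  set M' := c.K * Real.exp (c.δ*c.B*c.τbar) with hM'
  have hM'0 : 0 < M' := mul_pos c.hK0 (Real.exp_pos _)
  have hwin2 : ∀ r, s₀ - c.τbar ≤ r → r ≤ s₀ → c.x r ≤ M' := by
    intro r h1 h2
    have hrt₀ : c.t₀ ≤ r := by linarith
    have h3 := c.grow hrt₀ h2
    have h4 : Real.exp (c.δ*c.B*(s₀ - r)) ≤ Real.exp (c.δ*c.B*c.τbar) := by
      apply Real.exp_le_exp.2
      have hδB : 0 ≤ c.δ * c.B := (mul_pos c.hδ c.hB0).le
      nlinarith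
    have h5 : 0 < Real.exp (c.δ*c.B*(s₀ - r)) := Real.exp_pos _
    have hxs₀ : 0 < c.x s₀ := c.pos hs₀t₀'
    simp only [hM']
    nlinarith
  have hgro := c.gro hs₀t₀' hM'0 hwin2 ts hs₀r
  have h8 : Real.exp (c.B*c.P*(ts - s₀)) ≤ Real.exp (c.B*c.P*c.τbar) := by
    apply Real.exp_le_exp.2
    have hBP : 0 ≤ c.B * c.P := (mul_pos c.hB0 c.hP0).le
    nlinarith
  have h9 : c.x ts ≤ R := by
    have h10 : M' * Real.exp (c.B*c.P*c.τbar) = R := by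
      simp only [hM', hR]
      rw [mul_assoc, ← Real.exp_add]
      ring_nf
    have h11 : 0 < Real.exp (c.B*c.P*(ts - s₀)) := Real.exp_pos _
    nlinarith
  rw [htsx] at h9
  linarith

set_option maxHeartbeats 1000000 in
/-- Global persistence (lower bound) for the solution. -/
lemma global_lb : ∃ mm, 0 < mm ∧ ∀ t, c.t₀ ≤ t → mm ≤ c.x t := by
  obtain ⟨q, hqmem, hqmin⟩ :=
    (isCompact_Icc (a := c.t₀) (b := c.t₀ + 2*c.τbar)).exists_isMinOn
      (nonempty_Icc.2 (by linarith [c.hτbar0]))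
      (c.hxc.mono (fun s hs => le_trans c.ht₀τ hs.1))
  set A := c.x q with hA
  have hA0 : 0 < A := c.pos hqmem.1
  set R := c.K * Real.exp (-(c.δ*c.B*c.τbar)) with hR
  have hR0 : 0 < R := mul_pos c.hK0 (Real.exp_pos _)
  set mm := min A R / 2 with hmm
  have hmm0 : 0 < mm := by
    have := lt_min hA0 hR0
    simp only [hmm]
    linarith
  have hmmA : 2 * mm ≤ A := by
    have := min_le_left A R
    simp only [hmm]; linarith
  have hmmR : 2 * mm ≤ R := by
    have := min_le_right A R
    simp only [hmm]; linarith
  refine ⟨mm, hmm0, ?_⟩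
  intro t ht
  by_contra hcon
  push_neg at hcon
  have hwin : ∀ s, c.t₀ ≤ s → s ≤ c.t₀ + 2*c.τbar → A ≤ c.x s :=
    fun s h1 h2 => hqmin ⟨h1, h2⟩
  have hxT : mm < c.x c.t₀ := by
    have := hwin c.t₀ le_rfl (by linarith [c.hτbar0])
    linarith
  obtain ⟨ts, hts1, hts2, htsx, htsbefore, htsD⟩ := c.first_hit_le le_rfl ht hxT hcon.le
  have htst₀ : c.t₀ ≤ ts := hts1.le
  have htsgt : c.t₀ + 2*c.τbar < ts := by
    by_contra h
    push_neg at h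
    have := hwin ts htst₀ h
    rw [htsx] at this
    linarith
  -- S ts ≤ δ mm
  have hβpos : 0 < c.β ts := lt_of_lt_of_le c.hb (c.hβl ts htst₀)
  have hSle : c.S ts ≤ c.δ * mm := by
    have h5 : c.S ts - c.δ * c.x ts ≤ 0 := by
      by_contra h6
      push_neg at h6
      have : 0 < c.D ts := mul_pos hβpos h6
      linarith
    rw [htsx] at h5
    linarith
  -- lower bound on S ts
  set u := mm * Real.exp (c.δ*c.B*c.τbar) with hu
  have hw : ∀ j : Fin c.m, mm ≤ c.x (ts - c.τ j ts) := by
    intro j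
    have harg := c.τarg_mem (j := j) htst₀
    have h1 : c.t₀ ≤ ts - c.τ j ts := by
      have := c.hτu j ts htst₀
      have := c.hτ0 j ts htst₀
      linarith
    rcases eq_or_lt_of_le harg.2 with heq | hlt
    · rw [heq, htsx]
    · exact (htsbefore _ h1 hlt).le
  have hσb : ∀ j : Fin c.m, c.x (ts - c.σ j ts) ≤ u := by
    intro j
    have h1 : c.t₀ ≤ ts - c.σ j ts := by
      have := c.hσu j ts htst₀
      have := c.hσ0 j ts htst₀
      linarith
    have h2 : ts - c.σ j ts ≤ ts := by
      have := c.hσ0 j ts htst₀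
      linarith
    have h3 := c.grow h1 h2
    rw [htsx] at h3
    have h4 : Real.exp (c.δ*c.B*(ts - (ts - c.σ j ts))) ≤ Real.exp (c.δ*c.B*c.τbar) := by
      apply Real.exp_le_exp.2
      have hδB : 0 ≤ c.δ * c.B := (mul_pos c.hδ c.hB0).le
      have := c.hσu j ts htst₀
      nlinarith
    have h5 : 0 < Real.exp (c.δ*c.B*(ts - (ts - c.σ j ts))) := Real.exp_pos _
    simp only [hu]
    nlinarith
  have hSlb := c.S_ge htst₀ hmm0.le hw hσb
  have hphile : c.phi u ≤ c.δ := by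
    have := le_trans hSlb hSle
    have h6 : mm * c.phi u ≤ mm * c.δ := by nlinarith
    exact le_of_mul_le_mul_left (by linarith [h6]) hmm0
  have hKle : c.K ≤ u := c.K_le_of_phi_le hphile
  -- contradiction : mm ≥ K e^{-δBτ} = R yet 2mm ≤ R
  have hE : 0 < Real.exp (c.δ*c.B*c.τbar) := Real.exp_pos _
  have h7 : R ≤ mm := by
    have h8 : Real.exp (-(c.δ*c.B*c.τbar)) * Real.exp (c.δ*c.B*c.τbar) = 1 := by
      rw [← Real.exp_add]; simp
    simp only [hR]
    nlinarith [c.hK0]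
  linarith

end NC
end NicholsonAux
namespace NicholsonAux
namespace NC

variable (c : NC)

set_option maxHeartbeats 1000000 in
/-- Existence of near-supremum points with almost nonnegative derivative. -/
lemma good_max {T L ε ε' : ℝ} (hT : c.t₀ ≤ T) (hε' : 0 < ε')
    (hfreq : ∃ᶠ t in Filter.atTop, L - ε < c.x t) :
    ∃ tb, T ≤ tb ∧ L - ε ≤ c.x tb ∧ -ε' ≤ c.D tb := by
  by_contra hcon
  push_neg at hcon
  by_cases hA : ∃ T', T ≤ T' ∧ c.x T' < L - ε
  · obtain ⟨T', hTT', hxT'⟩ := hA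
    have hAllBelow : ∀ t, T' ≤ t → c.x t < L - ε := by
      intro t htt
      by_contra h
      push_neg at h
      obtain ⟨ts, h1, h2, h3, h4, h5⟩ := c.first_hit_ge (le_trans hT hTT') htt hxT' h
      have := hcon ts (le_trans hTT' h1.le) (le_of_eq h3.symm)
      linarith
    obtain ⟨t, htT', hxt⟩ := (Filter.frequently_atTop.1 hfreq) T'
    exact absurd (hAllBelow t htT') (not_lt.2 hxt.le)
  · push_neg at hA
    have hD : ∀ t, T ≤ t → c.D t ≤ -ε' := fun t htt => (hcon t htt (hA t htt)).le
    have hanti : AntitoneOn (fun s => c.x s + ε' * s) (Ici T) := by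
      apply antitoneOn_of_deriv_nonpos (convex_Ici _)
      · exact ((c.hxc.mono (fun s hs => le_trans c.ht₀τ (le_trans hT hs))).add
          (continuous_const.mul continuous_id).continuousOn)
      · intro s hs
        rw [interior_Ici] at hs
        have hx' : HasDerivAt c.x (c.D s) s :=
          (c.hasDeriv s (le_trans hT hs.le)).hasDerivAt (Ici_mem_nhds (lt_of_le_of_lt hT hs))
        exact ((hx'.add ((hasDerivAt_id s).const_mul ε')).differentiableAt).differentiableWithinAt
      · intro s hs
        rw [interior_Ici] at hs
        have hx' : HasDerivAt c.x (c.D s) s :=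
          (c.hasDeriv s (le_trans hT hs.le)).hasDerivAt (Ici_mem_nhds (lt_of_le_of_lt hT hs))
        have hder2 : HasDerivAt (fun s => c.x s + ε' * s) (c.D s + ε') s := by
          have := hx'.add ((hasDerivAt_id s).const_mul ε')
          exact this.congr_deriv (by simp)
        rw [hder2.deriv]
        have := hD s hs.le
        linarith
    set t2 := T + (c.x T + 1)/ε' with ht2
    have ht2T : T ≤ t2 := by
      have h0 : 0 < (c.x T + 1)/ε' := div_pos (by linarith [c.pos hT]) hε'
      rw [ht2]
      linarith
    have h6 := hanti (mem_Ici.2 (le_refl T)) (mem_Ici.2 ht2T) ht2T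
    simp only at h6
    have h8 : ε' * t2 - ε' * T = c.x T + 1 := by
      simp only [ht2]
      field_simp
      ring
    have h9 := c.pos (le_trans hT ht2T)
    linarith

set_option maxHeartbeats 1000000 in
/-- Existence of near-infimum points with almost nonpositive derivative. -/
lemma good_min {T l ε ε' : ℝ} (hT : c.t₀ ≤ T) (hε' : 0 < ε') (hl0 : 0 ≤ l + ε)
    (hfreq : ∃ᶠ t in Filter.atTop, c.x t < l + ε) :
    ∃ tb, T ≤ tb ∧ c.x tb ≤ l + ε ∧ c.D tb ≤ ε' := by
  by_contra hcon
  push_neg at hcon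
  by_cases hA : ∃ T', T ≤ T' ∧ l + ε < c.x T'
  · obtain ⟨T', hTT', hxT'⟩ := hA
    have hAllAbove : ∀ t, T' ≤ t → l + ε < c.x t := by
      intro t htt
      by_contra h
      push_neg at h
      obtain ⟨ts, h1, h2, h3, h4, h5⟩ := c.first_hit_le (le_trans hT hTT') htt hxT' h
      have := hcon ts (le_trans hTT' h1.le) (le_of_eq h3)
      linarith
    obtain ⟨t, htT', hxt⟩ := (Filter.frequently_atTop.1 hfreq) T'
    exact absurd (hAllAbove t htT') (not_lt.2 hxt.le)
  · push_neg at hA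
    have hD : ∀ t, T ≤ t → ε' ≤ c.D t := fun t htt => (hcon t htt (hA t htt)).le
    have hmono : MonotoneOn (fun s => c.x s - ε' * s) (Ici T) := by
      apply monotoneOn_of_deriv_nonneg (convex_Ici _)
      · exact ((c.hxc.mono (fun s hs => le_trans c.ht₀τ (le_trans hT hs))).sub
          (continuous_const.mul continuous_id).continuousOn)
      · intro s hs
        rw [interior_Ici] at hs
        have hx' : HasDerivAt c.x (c.D s) s :=
          (c.hasDeriv s (le_trans hT hs.le)).hasDerivAt (Ici_mem_nhds (lt_of_le_of_lt hT hs))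
        exact ((hx'.sub ((hasDerivAt_id s).const_mul ε')).differentiableAt).differentiableWithinAt
      · intro s hs
        rw [interior_Ici] at hs
        have hx' : HasDerivAt c.x (c.D s) s :=
          (c.hasDeriv s (le_trans hT hs.le)).hasDerivAt (Ici_mem_nhds (lt_of_le_of_lt hT hs))
        have hder2 : HasDerivAt (fun s => c.x s - ε' * s) (c.D s - ε') s := by
          have := hx'.sub ((hasDerivAt_id s).const_mul ε')
          exact this.congr_deriv (by simp)
        rw [hder2.deriv]
        have := hD s hs.le
        linarith
    set t2 := T + (l + ε)/ε' + 1 with ht2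
    have ht2T : T ≤ t2 := by
      have h0 : 0 ≤ (l + ε)/ε' := div_nonneg hl0 hε'.le
      rw [ht2]
      linarith
    have h6 := hmono (mem_Ici.2 (le_refl T)) (mem_Ici.2 ht2T) ht2T
    simp only at h6
    have h8 : ε' * t2 - ε' * T = (l + ε) + ε' := by
      simp only [ht2]
      field_simp
      ring
    have h9 := c.pos hT
    have h10 := hA t2 ht2T
    linarith

end NC
end NicholsonAux
namespace NicholsonAux
namespace NC

variable (c : NC)

lemma bddle : Filter.IsBoundedUnder (· ≤ ·) Filter.atTop c.x := by
  obtain ⟨M, hM0, hMub⟩ := c.global_ub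
  exact ⟨M, Filter.eventually_map.2 (Filter.eventually_atTop.2
    ⟨c.t₀, fun t ht => hMub t (le_trans c.ht₀τ ht)⟩)⟩

lemma bddge : Filter.IsBoundedUnder (· ≥ ·) Filter.atTop c.x := by
  obtain ⟨mm, hmm0, hmmlb⟩ := c.global_lb
  exact ⟨mm, Filter.eventually_map.2 (Filter.eventually_atTop.2
    ⟨c.t₀, fun t ht => hmmlb t ht⟩)⟩

lemma liminf_pos : 0 < Filter.liminf c.x Filter.atTop := by
  obtain ⟨mm, hmm0, hmmlb⟩ := c.global_lb
  have h1 : mm ≤ Filter.liminf c.x Filter.atTop :=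
    Filter.le_liminf_of_le c.bddle.isCoboundedUnder_ge
      (Filter.eventually_atTop.2 ⟨c.t₀, fun t ht => hmmlb t ht⟩)
  linarith

lemma liminf_le_limsup' : Filter.liminf c.x Filter.atTop ≤ Filter.limsup c.x Filter.atTop :=
  Filter.liminf_le_limsup c.bddle c.bddge

lemma limsup_pos : 0 < Filter.limsup c.x Filter.atTop :=
  lt_of_lt_of_le c.liminf_pos c.liminf_le_limsup'

set_option maxHeartbeats 2000000 in
/-- The sharp-constant upper estimate for the limsup. -/
lemma limsup_le :
    Filter.limsup c.x Filter.atTop ≤ c.K * Real.exp ((c.δ + c.P) * c.B * c.τbar) := by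
  have hbddle := c.bddle
  have hbddge := c.bddge
  set L := Filter.limsup c.x Filter.atTop with hL
  have hL0 : 0 < L := c.limsup_pos
  by_contra hcon
  push_neg at hcon
  set θ := (c.δ + c.P) * c.B * c.τbar with hθ
  have hθ0 : 0 ≤ θ :=
    mul_nonneg (mul_nonneg (by linarith [c.hδ, c.hP0]) c.hB0.le) c.hτbar0
  have hexpθ : 0 < Real.exp θ := Real.exp_pos _
  have hLK : c.K < L * Real.exp (-θ) := by
    rw [Real.exp_neg, ← div_eq_mul_inv, lt_div_iff₀ hexpθ]
    exact hcon
  set K₁ := (c.K + L * Real.exp (-θ))/2 with hK₁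
  have hK₁1 : c.K < K₁ := by rw [hK₁]; linarith
  have hK₁2 : K₁ * Real.exp θ < L := by
    have h1 : K₁ < L * Real.exp (-θ) := by rw [hK₁]; linarith
    calc K₁ * Real.exp θ < L * Real.exp (-θ) * Real.exp θ :=
          mul_lt_mul_of_pos_right h1 hexpθ
      _ = L := by rw [mul_assoc, ← Real.exp_add]; simp
  have hK₁0 : 0 < K₁ := lt_trans c.hK0 hK₁1
  set d := c.δ - c.phi K₁ with hd
  have hd0 : 0 < d := by
    have h2 := c.phi_lt_phi hK₁1
    rw [c.phiK] at h2
    rw [hd]; linarith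
  set R := K₁ * Real.exp θ with hRdef
  have hR0 : 0 < R := mul_pos hK₁0 hexpθ
  have h2δ : (0:ℝ) < 2*c.δ + 1 := by linarith [c.hδ]
  set Q := L*d/(2*(2*c.δ + 1)) with hQ
  have hQ0 : 0 < Q := div_pos (mul_pos hL0 hd0) (by linarith)
  set ε := min ((L - R)/2) Q with hε
  have hε0 : 0 < ε := lt_min (by linarith) hQ0
  set ε' := c.b * Q with hε'
  have hε'0 : 0 < ε' := mul_pos c.hb hQ0
  have hε'b : ε'/c.b = Q := by rw [hε', mul_comm, mul_div_assoc, div_self c.hb.ne', mul_one]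
  have hphipos := c.phi_pos K₁
  have hdagger : (L + ε) * c.phi K₁ + ε'/c.b < c.δ * (L - ε) := by
    rw [hε'b]
    have hphiK₁ : c.phi K₁ = c.δ - d := by rw [hd]; ring
    rw [hphiK₁]
    have h1 : ε ≤ Q := min_le_right _ _
    have heq2 : Q * (2*c.δ + 1) = L*d/2 := by rw [hQ]; field_simp
    nlinarith [mul_nonneg hε0.le hd0.le, mul_pos hL0 hd0,
      mul_le_mul_of_nonneg_right h1 (le_of_lt h2δ)]
  -- eventual upper bound and frequently near-L points
  have hev : ∀ᶠ t in Filter.atTop, c.x t < L + ε :=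
    Filter.eventually_lt_of_limsup_lt (by rw [← hL]; linarith) hbddle
  obtain ⟨T₁', hT₁'⟩ := Filter.eventually_atTop.1 hev
  set T₁ := max T₁' c.t₀ with hT₁
  have hT₁t₀ : c.t₀ ≤ T₁ := le_max_right _ _
  have hub : ∀ t, T₁ ≤ t → c.x t < L + ε := fun t ht =>
    hT₁' t (le_trans (le_max_left _ _) ht)
  have hfreq : ∃ᶠ t in Filter.atTop, L - ε < c.x t :=
    Filter.frequently_lt_of_lt_limsup hbddge.isCoboundedUnder_le (by rw [← hL]; linarith)
  have hT2 : c.t₀ ≤ T₁ + 2*c.τbar := by linarith [c.hτbar0]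
  obtain ⟨tb, htbT, htbx, htbD⟩ := c.good_max (T := T₁ + 2*c.τbar) hT2 hε'0 hfreq
  have htbt₀ : c.t₀ ≤ tb := le_trans hT2 htbT
  have hβl := c.hβl tb htbt₀
  have hβpos : 0 < c.β tb := lt_of_lt_of_le c.hb hβl
  -- lower bound on S tb
  have hSlb : c.δ * (L - ε) - ε'/c.b ≤ c.S tb := by
    have h5 : c.δ * (L - ε) ≤ c.δ * c.x tb := mul_le_mul_of_nonneg_left htbx c.hδ.le
    rcases le_or_gt (c.δ * c.x tb) (c.S tb) with h | h
    · have hb' : 0 < ε'/c.b := div_pos hε'0 c.hb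
      linarith
    · have h1 : c.b * (c.δ * c.x tb - c.S tb) ≤ c.β tb * (c.δ * c.x tb - c.S tb) :=
        mul_le_mul_of_nonneg_right hβl (by linarith)
      have h2 : c.β tb * (c.δ * c.x tb - c.S tb) ≤ ε' := by
        have heqD : c.D tb = -(c.β tb * (c.δ * c.x tb - c.S tb)) := by rw [D]; ring
        rw [heqD] at htbD
        linarith
      have h4 : c.δ * c.x tb - c.S tb ≤ ε'/c.b := by
        rw [le_div_iff₀ c.hb]
        nlinarith
      linarith
  -- window upper bounds
  have hwinup : ∀ j : Fin c.m, c.x (tb - c.τ j tb) ≤ L + ε := by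
    intro j
    have h1 : T₁ ≤ tb - c.τ j tb := by
      have h2 := c.hτu j tb htbt₀
      have h3 := c.hτbar0
      linarith [htbT]
    exact (hub _ h1).le
  have hdich : ∃ j : Fin c.m, c.x (tb - c.σ j tb) ≤ K₁ := by
    by_contra h7
    push_neg at h7
    have hLpos : 0 < L + ε := by linarith
    have h8 := c.S_lt_phi htbt₀ hLpos hwinup h7
    linarith
  obtain ⟨j₀, hj₀⟩ := hdich
  set s₀ := tb - c.σ j₀ tb with hs₀
  have hσu' := c.hσu j₀ tb htbt₀
  have hσ0' := c.hσ0 j₀ tb htbt₀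
  have hs₀T₁ : T₁ ≤ s₀ := by rw [hs₀]; linarith [htbT, c.hτbar0]
  have hs₀t₀ : c.t₀ ≤ s₀ := le_trans hT₁t₀ hs₀T₁
  have hs₀tb : s₀ ≤ tb := by rw [hs₀]; linarith
  set M' := K₁ * Real.exp (c.δ*c.B*c.τbar) with hM'
  have hM'0 : 0 < M' := mul_pos hK₁0 (Real.exp_pos _)
  have hwin2 : ∀ r, s₀ - c.τbar ≤ r → r ≤ s₀ → c.x r ≤ M' := by
    intro r h1 h2
    have hrt₀ : c.t₀ ≤ r := by
      rw [hs₀] at h1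
      have h3 := htbT
      linarith [hT₁t₀]
    have h3 := c.grow hrt₀ h2
    have h4 : Real.exp (c.δ*c.B*(s₀ - r)) ≤ Real.exp (c.δ*c.B*c.τbar) := by
      apply Real.exp_le_exp.2
      have hδB : 0 ≤ c.δ * c.B := (mul_pos c.hδ c.hB0).le
      nlinarith
    have h5 : 0 < Real.exp (c.δ*c.B*(s₀ - r)) := Real.exp_pos _
    have hxs₀pos : 0 < c.x s₀ := c.pos hs₀t₀
    simp only [hM']
    nlinarith [hj₀]
  have hgro := c.gro hs₀t₀ hM'0 hwin2 tb hs₀tb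
  have h8 : Real.exp (c.B*c.P*(tb - s₀)) ≤ Real.exp (c.B*c.P*c.τbar) := by
    apply Real.exp_le_exp.2
    have hBP : 0 ≤ c.B * c.P := (mul_pos c.hB0 c.hP0).le
    nlinarith
  have hfin : c.x tb ≤ R := by
    have h10 : M' * Real.exp (c.B*c.P*c.τbar) = R := by
      simp only [hM', hRdef, hθ]
      rw [mul_assoc, ← Real.exp_add]
      ring_nf
    have h11 : 0 < Real.exp (c.B*c.P*(tb - s₀)) := Real.exp_pos _
    nlinarith
  have hεle : ε ≤ (L - R)/2 := min_le_left _ _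
  linarith

end NC
end NicholsonAux
namespace NicholsonAux
namespace NC

variable (c : NC)

set_option maxHeartbeats 2000000 in
/-- The sharp-constant lower estimate for the liminf. -/
lemma liminf_ge :
    c.K * Real.exp (-(c.δ * c.B * c.τbar)) ≤ Filter.liminf c.x Filter.atTop := by
  have hbddle := c.bddle
  have hbddge := c.bddge
  set l := Filter.liminf c.x Filter.atTop with hl
  have hl0 : 0 < l := c.liminf_pos
  by_contra hcon
  push_neg at hcon
  set E := c.δ * c.B * c.τbar with hE
  have hE0 : 0 ≤ E := mul_nonneg (mul_nonneg c.hδ.le c.hB0.le) c.hτbar0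
  have hexpE : 0 < Real.exp E := Real.exp_pos _
  have hexpE' : 0 < Real.exp (-E) := Real.exp_pos _
  have hEE' : Real.exp (-E) * Real.exp E = 1 := by rw [← Real.exp_add]; simp
  have hlK : l * Real.exp E < c.K := by
    -- from hcon : l < K exp(-E)
    nlinarith [hcon]
  set K₀ := (l * Real.exp E + c.K)/2 with hK₀
  have hK₀1 : K₀ < c.K := by rw [hK₀]; linarith
  have hK₀2 : l * Real.exp E < K₀ := by rw [hK₀]; linarith
  have hK₀0 : 0 < K₀ := by
    have : 0 < l * Real.exp E := mul_pos hl0 hexpE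
    linarith
  have hgap : l < K₀ * Real.exp (-E) := by
    -- l exp E < K₀ ⇒ l < K₀ exp(-E)
    nlinarith [hK₀2]
  set d₀ := c.phi K₀ - c.δ with hd₀
  have hd₀0 : 0 < d₀ := by
    have h2 := c.phi_lt_phi hK₀1
    rw [c.phiK] at h2
    rw [hd₀]; linarith
  have h2δ : (0:ℝ) < 2*c.δ + d₀ + 1 := by linarith [c.hδ]
  set Q := l*d₀/(2*(2*c.δ + d₀ + 1)) with hQ
  have hQ0 : 0 < Q := div_pos (mul_pos hl0 hd₀0) (by linarith)
  set ε := min ((K₀ * Real.exp (-E) - l)/2) Q with hε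
  have hε0 : 0 < ε := lt_min (by linarith) hQ0
  have hεQ : ε ≤ Q := min_le_right _ _
  have hεl : ε ≤ l/2 := by
    have h1 : Q ≤ l/2 := by
      rw [hQ, div_le_div_iff₀ (by linarith) (by norm_num)]
      nlinarith [mul_pos hl0 c.hδ, mul_pos hl0 hd₀0, hl0]
    linarith
  set ε' := c.b * Q with hε'
  have hε'0 : 0 < ε' := mul_pos c.hb hQ0
  have hε'b : ε'/c.b = Q := by
    rw [hε', mul_comm, mul_div_assoc, div_self c.hb.ne', mul_one]
  have hdagger : c.δ * (l + ε) + ε'/c.b < (l - ε) * c.phi K₀ := by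
    rw [hε'b]
    have hphiK₀ : c.phi K₀ = c.δ + d₀ := by rw [hd₀]; ring
    rw [hphiK₀]
    have heq2 : Q * (2*c.δ + d₀ + 1) = l*d₀/2 := by rw [hQ]; field_simp
    nlinarith [mul_nonneg hε0.le hd₀0.le, mul_pos hl0 hd₀0,
      mul_le_mul_of_nonneg_right hεQ (le_of_lt h2δ),
      mul_nonneg hQ0.le (show (0:ℝ) ≤ 2*c.δ + d₀ by linarith [c.hδ])]
  -- eventual lower bound and frequently near-l points
  have hev : ∀ᶠ t in Filter.atTop, l - ε < c.x t :=
    Filter.eventually_lt_of_lt_liminf (by rw [← hl]; linarith) hbddge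
  obtain ⟨T₁', hT₁'⟩ := Filter.eventually_atTop.1 hev
  set T₁ := max T₁' c.t₀ with hT₁
  have hT₁t₀ : c.t₀ ≤ T₁ := le_max_right _ _
  have hlb : ∀ t, T₁ ≤ t → l - ε < c.x t := fun t ht =>
    hT₁' t (le_trans (le_max_left _ _) ht)
  have hfreq : ∃ᶠ t in Filter.atTop, c.x t < l + ε :=
    Filter.frequently_lt_of_liminf_lt hbddle.isCoboundedUnder_ge (by rw [← hl]; linarith)
  have hT2 : c.t₀ ≤ T₁ + 2*c.τbar := by linarith [c.hτbar0]
  obtain ⟨tb, htbT, htbx, htbD⟩ := c.good_min (T := T₁ + 2*c.τbar) hT2 hε'0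
    (by linarith) hfreq
  have htbt₀ : c.t₀ ≤ tb := le_trans hT2 htbT
  have hβl := c.hβl tb htbt₀
  have hβpos : 0 < c.β tb := lt_of_lt_of_le c.hb hβl
  -- upper bound on S tb
  have hSub : c.S tb ≤ c.δ * (l + ε) + ε'/c.b := by
    have h5 : c.δ * c.x tb ≤ c.δ * (l + ε) := mul_le_mul_of_nonneg_left htbx c.hδ.le
    rcases le_or_gt (c.S tb) (c.δ * c.x tb) with h | h
    · have hb' : 0 < ε'/c.b := div_pos hε'0 c.hb
      linarith
    · have h1 : c.b * (c.S tb - c.δ * c.x tb) ≤ c.β tb * (c.S tb - c.δ * c.x tb) :=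
        mul_le_mul_of_nonneg_right hβl (by linarith)
      have h2 : c.β tb * (c.S tb - c.δ * c.x tb) ≤ ε' := by
        have heqD : c.D tb = c.β tb * (c.S tb - c.δ * c.x tb) := by rw [D]
        rw [heqD] at htbD
        exact htbD
      have h4 : c.S tb - c.δ * c.x tb ≤ ε'/c.b := by
        rw [le_div_iff₀ c.hb]
        nlinarith
      linarith
  -- window lower bounds
  have hwinlow : ∀ j : Fin c.m, l - ε ≤ c.x (tb - c.τ j tb) := by
    intro j
    have h1 : T₁ ≤ tb - c.τ j tb := by
      have h2 := c.hτu j tb htbt₀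
      have h3 := c.hτbar0
      linarith [htbT]
    exact (hlb _ h1).le
  have hdich : ∃ j : Fin c.m, K₀ ≤ c.x (tb - c.σ j tb) := by
    by_contra h7
    push_neg at h7
    have h8 := c.S_ge htbt₀ (by linarith : (0:ℝ) ≤ l - ε) hwinlow
      (fun j => (h7 j).le)
    linarith
  obtain ⟨j₀, hj₀⟩ := hdich
  set s₀ := tb - c.σ j₀ tb with hs₀
  have hσu' := c.hσu j₀ tb htbt₀
  have hσ0' := c.hσ0 j₀ tb htbt₀
  have hs₀t₀ : c.t₀ ≤ s₀ := by
    rw [hs₀]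
    linarith [htbT, hT₁t₀, c.hτbar0]
  have hs₀tb : s₀ ≤ tb := by rw [hs₀]; linarith
  -- x tb is at least K₀ e^{-E}
  have hgrow := c.grow hs₀t₀ hs₀tb
  have hexps : Real.exp (c.δ*c.B*(tb - s₀)) ≤ Real.exp E := by
    apply Real.exp_le_exp.2
    rw [hE]
    have hδB : 0 ≤ c.δ * c.B := (mul_pos c.hδ c.hB0).le
    have h9 : tb - s₀ ≤ c.τbar := by rw [hs₀]; linarith
    nlinarith
  have hxtbpos : 0 < c.x tb := c.pos htbt₀
  have h10 : K₀ ≤ c.x tb * Real.exp E := by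
    have h11 : 0 < Real.exp (c.δ*c.B*(tb - s₀)) := Real.exp_pos _
    nlinarith [hj₀, hgrow]
  have h12 : K₀ * Real.exp (-E) ≤ c.x tb := by
    nlinarith [h10]
  have hεle : ε ≤ (K₀ * Real.exp (-E) - l)/2 := min_le_left _ _
  linarith
end NC
end NicholsonAux

namespace NicholsonAux

/-- Build a context from the hypotheses of the main theorem. -/
noncomputable def mkCtx
    (m : ℕ) (hm : 1 ≤ m) (p a : Fin m → ℝ)
    (hp : ∀ j, 0 < p j) (ha : ∀ j, 0 < a j) (δ : ℝ) (hδ : 0 < δ)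
    (t₀ : ℝ) (β : ℝ → ℝ) (τ σ : Fin m → ℝ → ℝ)
    (hτ0 : ∀ j, ∀ t ∈ Set.Ici t₀, 0 ≤ τ j t)
    (hσ0 : ∀ j, ∀ t ∈ Set.Ici t₀, 0 ≤ σ j t)
    (βminus βplus : ℝ)
    (hβminus : IsGLB (β '' Set.Ici t₀) βminus) (hβmpos : 0 < βminus)
    (hβplus : IsLUB (β '' Set.Ici t₀) βplus)
    (τbar : ℝ)
    (hτbar : IsLUB ((⋃ j, τ j '' Set.Ici t₀) ∪ ⋃ j, σ j '' Set.Ici t₀) τbar)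
    (hpδ : δ < ∑ j, p j)
    (K : ℝ) (hK0 : 0 < K) (hK : ∑ j, p j * Real.exp (-(a j) * K) = δ)
    (x : ℝ → ℝ) (hsol : NicholsonSolution m p a δ t₀ τbar β τ σ x) : NC where
  m := m
  hm := hm
  p := p
  a := a
  hp := hp
  ha := ha
  δ := δ
  hδ := hδ
  t₀ := t₀
  β := β
  τ := τ
  σ := σ
  b := βminus
  B := βplus
  hb := hβmpos
  hβl := fun t ht => hβminus.1 ⟨t, ht, rfl⟩
  hβu := fun t ht => hβplus.1 ⟨t, ht, rfl⟩
  τbar := τbar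
  hτbar0 := le_trans (hτ0 ⟨0, hm⟩ t₀ Set.self_mem_Ici)
    (hτbar.1 (Set.mem_union_left _ (Set.mem_iUnion.2
      ⟨⟨0, hm⟩, Set.mem_image_of_mem _ (le_refl t₀)⟩)))
  hτu := fun j t ht => hτbar.1 (Set.mem_union_left _ (Set.mem_iUnion.2
    ⟨j, Set.mem_image_of_mem _ ht⟩))
  hσu := fun j t ht => hτbar.1 (Set.mem_union_right _ (Set.mem_iUnion.2
    ⟨j, Set.mem_image_of_mem _ ht⟩))
  hτ0 := fun j t ht => hτ0 j t (Set.mem_Ici.2 ht)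
  hσ0 := fun j t ht => hσ0 j t (Set.mem_Ici.2 ht)
  hpδ := hpδ
  K := K
  hK0 := hK0
  hKeq := hK
  x := x
  hxc := hsol.1
  hder := fun t ht => hsol.2.1 t ht
  hinit := hsol.2.2.1
  hx0 := hsol.2.2.2

end NicholsonAux


/- STATEMENT 2 (Theorem 2.1, permanence): if p := Σ_j p_j > δ then every
   solution with admissible initial data satisfies
   K e^{−2δβ⁺τ} ≤ liminf x ≤ limsup x ≤ K e^{2(δ+p)β⁺τ};
   in particular the equation is permanent. -/
theorem nicholson_permanence
    (m : ℕ) (hm : 1 ≤ m) (p a : Fin m → ℝ)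
    (hp : ∀ j, 0 < p j) (ha : ∀ j, 0 < a j) (δ : ℝ) (hδ : 0 < δ)
    (t₀ : ℝ) (β : ℝ → ℝ) (τ σ : Fin m → ℝ → ℝ)
    (hβc : ContinuousOn β (Set.Ici t₀))
    (hτc : ∀ j, ContinuousOn (τ j) (Set.Ici t₀))
    (hσc : ∀ j, ContinuousOn (σ j) (Set.Ici t₀))
    (hτ0 : ∀ j, ∀ t ∈ Set.Ici t₀, 0 ≤ τ j t)
    (hσ0 : ∀ j, ∀ t ∈ Set.Ici t₀, 0 ≤ σ j t)
    -- β⁻ := inf β > 0 and β⁺ := sup β on [t₀,∞)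
    (βminus βplus : ℝ)
    (hβminus : IsGLB (β '' Set.Ici t₀) βminus) (hβmpos : 0 < βminus)
    (hβplus : IsLUB (β '' Set.Ici t₀) βplus)
    -- τbar is the max over j of the sups of τ_j and σ_j over [t₀,∞)
    (τbar : ℝ)
    (hτbar : IsLUB ((⋃ j, τ j '' Set.Ici t₀) ∪ ⋃ j, σ j '' Set.Ici t₀) τbar)
    -- p > δ and K is the positive equilibrium
    (hpδ : δ < ∑ j, p j)
    (K : ℝ) (hK0 : 0 < K) (hK : ∑ j, p j * Real.exp (-(a j) * K) = δ) :
    (∀ x : ℝ → ℝ, NicholsonSolution m p a δ t₀ τbar β τ σ x →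
      K * Real.exp (-(2 * δ * βplus * τbar)) ≤ Filter.liminf x Filter.atTop ∧
      Filter.liminf x Filter.atTop ≤ Filter.limsup x Filter.atTop ∧
      Filter.limsup x Filter.atTop ≤ K * Real.exp (2 * (δ + ∑ j, p j) * βplus * τbar)) ∧
    (∃ m' M' : ℝ, 0 < m' ∧ 0 < M' ∧
      ∀ x : ℝ → ℝ, NicholsonSolution m p a δ t₀ τbar β τ σ x →
        ∀ᶠ t in Filter.atTop, m' ≤ x t ∧ x t ≤ M') := by
  -- common facts
  have hB0 : 0 < βplus := by
    have h1 := hβminus.1 (⟨t₀, le_refl t₀, rfl⟩ : β t₀ ∈ β '' Set.Ici t₀)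
    have h2 := hβplus.1 (⟨t₀, le_refl t₀, rfl⟩ : β t₀ ∈ β '' Set.Ici t₀)
    linarith
  have hτbar0 : 0 ≤ τbar :=
    le_trans (hτ0 ⟨0, hm⟩ t₀ Set.self_mem_Ici)
      (hτbar.1 (Set.mem_union_left _ (Set.mem_iUnion.2
        ⟨⟨0, hm⟩, Set.mem_image_of_mem _ (le_refl t₀)⟩)))
  have hP0 : 0 < ∑ j, p j := lt_trans hδ hpδ
  have hδBτ : 0 ≤ δ * βplus * τbar :=
    mul_nonneg (mul_nonneg hδ.le hB0.le) hτbar0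
  have hPBτ : 0 ≤ (δ + ∑ j, p j) * βplus * τbar :=
    mul_nonneg (mul_nonneg (by linarith) hB0.le) hτbar0
  have key : ∀ x : ℝ → ℝ, NicholsonSolution m p a δ t₀ τbar β τ σ x →
      K * Real.exp (-(2 * δ * βplus * τbar)) ≤ Filter.liminf x Filter.atTop ∧
      Filter.liminf x Filter.atTop ≤ Filter.limsup x Filter.atTop ∧
      Filter.limsup x Filter.atTop ≤ K * Real.exp (2 * (δ + ∑ j, p j) * βplus * τbar) := by
    intro x hsol
    set c : NicholsonAux.NC := NicholsonAux.mkCtx m hm p a hp ha δ hδ t₀ β τ σ hτ0 hσ0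
      βminus βplus hβminus hβmpos hβplus τbar hτbar hpδ K hK0 hK x hsol with hc
    have h1 := c.liminf_ge
    have h2 := c.limsup_le
    have h3 := c.liminf_le_limsup'
    refine ⟨?_, h3, ?_⟩
    · refine le_trans ?_ h1
      apply mul_le_mul_of_nonneg_left _ hK0.le
      apply Real.exp_le_exp.2
      have : c.δ * c.B * c.τbar = δ * βplus * τbar := rfl
      rw [this]
      linarith
    · refine le_trans h2 ?_
      apply mul_le_mul_of_nonneg_left _ hK0.le
      apply Real.exp_le_exp.2
      have : (c.δ + c.P) * c.B * c.τbar = (δ + ∑ j, p j) * βplus * τbar := rfl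
      rw [this]
      linarith
  refine ⟨key, ?_⟩
  refine ⟨K * Real.exp (-(2 * δ * βplus * τbar)) / 2,
    K * Real.exp (2 * (δ + ∑ j, p j) * βplus * τbar) + 1,
    by positivity, by positivity, ?_⟩
  intro x hsol
  set c : NicholsonAux.NC := NicholsonAux.mkCtx m hm p a hp ha δ hδ t₀ β τ σ hτ0 hσ0
    βminus βplus hβminus hβmpos hβplus τbar hτbar hpδ K hK0 hK x hsol with hc
  obtain ⟨hlo, hmid, hhi⟩ := key x hsol
  have hKexp : 0 < K * Real.exp (-(2 * δ * βplus * τbar)) := by positivity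
  have hev1 : ∀ᶠ t in Filter.atTop, K * Real.exp (-(2 * δ * βplus * τbar)) / 2 < x t := by
    have : K * Real.exp (-(2 * δ * βplus * τbar)) / 2 < Filter.liminf x Filter.atTop := by
      linarith
    exact Filter.eventually_lt_of_lt_liminf this c.bddge
  have hev2 : ∀ᶠ t in Filter.atTop,
      x t < K * Real.exp (2 * (δ + ∑ j, p j) * βplus * τbar) + 1 := by
    have : Filter.limsup x Filter.atTop <
        K * Real.exp (2 * (δ + ∑ j, p j) * βplus * τbar) + 1 := by linarith
    exact Filter.eventually_lt_of_limsup_lt this c.bddle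
  filter_upwards [hev1, hev2] with t h1 h2
  exact ⟨h1.le, h2.le⟩
end

section
/- (Lemma 3.1(a).) Let I = [a,b] be a real interval with a < b, where b is a real number or +∞ (i.e., I = [a,b] or I = [a,∞)). Let f : I → I be continuous with a unique fixed point x* ∈ (a,b), and suppose (f(x) − x*)(x − x*) < 0 for all x ∈ (a,b) with x ≠ x*. If x* is a global attractor for the difference equation x_{n+1} = f(x_n) (i.e., for every x₀ ∈ I the iterates f^n(x₀) converge to x*), then there are no points c, d ∈ I with c < d such that f([c,d]) ⊇ [c,d]. -/
open Set Filter Topology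

/- STATEMENT 6 (Lemma 3.1(a)): let I = [a,b] (b real, a < b) or I = [a,∞),
   f : I → I continuous with unique fixed point x* in the interior of I,
   with (f(x) − x*)(x − x*) < 0 for interior x ≠ x*. If x* is a global
   attractor for x_{n+1} = f(x_n), then there are no c < d in I with
   f([c,d]) ⊇ [c,d]. -/
theorem global_attractor_no_expanding_interval
    (a : ℝ) (I : Set ℝ)
    (hI : I = Set.Ici a ∨ ∃ b, a < b ∧ I = Set.Icc a b)
    (f : ℝ → ℝ) (hfc : ContinuousOn f I) (hmaps : Set.MapsTo f I I)
    (xstar : ℝ) (hx : xstar ∈ interior I) (hfix : f xstar = xstar)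
    (huniq : ∀ x ∈ I, f x = x → x = xstar)
    (hneg : ∀ x ∈ interior I, x ≠ xstar → (f x - xstar) * (x - xstar) < 0)
    (hattr : ∀ x₀ ∈ I, Filter.Tendsto (fun n => f^[n] x₀) Filter.atTop (nhds xstar)) :
    ¬ ∃ c ∈ I, ∃ d ∈ I, c < d ∧ Set.Icc c d ⊆ f '' Set.Icc c d := by
  rintro ⟨c, hcI, d, hdI, hcd, hcov⟩
  -- basic facts about I
  have haI : a ∈ I := by
    rcases hI with h | ⟨b, hab, h⟩
    · rw [h]; exact self_mem_Ici
    · rw [h]; exact ⟨le_refl a, le_of_lt hab⟩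
  have hinmem : ∀ y ∈ I, a ≤ y := by
    intro y hy
    rcases hI with h | ⟨b, hab, h⟩
    · rw [h] at hy; exact hy
    · rw [h] at hy; exact hy.1
  have hax : a < xstar := by
    rcases hI with h | ⟨b, hab, h⟩
    · rw [h, interior_Ici] at hx; exact hx
    · rw [h, interior_Icc] at hx; exact hx.1
  have hIccI : Icc c d ⊆ I := by
    rcases hI with h | ⟨b, hab, h⟩
    · rw [h] at hcI ⊢; exact fun x hxm => le_trans hcI hxm.1
    · rw [h] at hcI hdI ⊢; exact fun x hxm => ⟨le_trans hcI.1 hxm.1, le_trans hxm.2 hdI.2⟩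
  have hIooInt : Ioo a xstar ⊆ interior I := by
    rcases hI with h | ⟨b, hab, h⟩
    · rw [h, interior_Ici]; exact fun t ht => ht.1
    · rw [h, interior_Icc] at hx ⊢; exact fun t ht => ⟨ht.1, lt_trans ht.2 hx.2⟩
  -- weak sign conditions on all of I
  have hge : ∀ x ∈ I, x < xstar → xstar ≤ f x := by
    intro x hxI hxlt
    by_cases hxi : x ∈ interior I
    · have := hneg x hxi (ne_of_lt hxlt)
      nlinarith
    · have hxa : x = a := by
        rcases hI with h | ⟨b, hab, h⟩
        · rw [h, interior_Ici] at hxi; rw [h] at hxI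
          exact le_antisymm (not_lt.mp hxi) hxI
        · rw [h, interior_Icc] at hxi hx; rw [h] at hxI
          rcases not_and_or.mp (fun hh : a < x ∧ x < b => hxi hh) with h1 | h1
          · exact le_antisymm (not_lt.mp h1) hxI.1
          · exact absurd (lt_trans hxlt hx.2) h1
      rw [hxa]
      have hne : (𝓝[Ioo a xstar] a).NeBot := by
        apply mem_closure_iff_nhdsWithin_neBot.mp
        rw [closure_Ioo (ne_of_lt hax)]
        exact ⟨le_refl a, le_of_lt hax⟩
      have ht : Tendsto f (𝓝[Ioo a xstar] a) (𝓝 (f a)) :=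
        (hfc a haI).mono_left (nhdsWithin_mono a (fun t htm => interior_subset (hIooInt htm)))
      haveI := hne
      exact ge_of_tendsto ht (eventually_nhdsWithin_of_forall (fun t htm => by
        have hprod := hneg t (hIooInt htm) (ne_of_lt htm.2)
        by_contra hlt
        push_neg at hlt
        have : (0:ℝ) < (f t - xstar) * (t - xstar) :=
          mul_pos_of_neg_of_neg (by linarith) (by linarith [htm.2])
        linarith))
  have hle : ∀ x ∈ I, xstar < x → f x ≤ xstar := by
    intro x hxI hxgt
    by_cases hxi : x ∈ interior I
    · have := hneg x hxi (ne_of_gt hxgt)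
      nlinarith
    · rcases hI with h | ⟨b, hab, h⟩
      · rw [h, interior_Ici] at hxi; rw [h] at hxI
        have : x = a := le_antisymm (not_lt.mp hxi) hxI
        linarith
      · rw [h, interior_Icc] at hxi hx; rw [h] at hxI
        have hxb : x = b := by
          rcases not_and_or.mp (fun hh : a < x ∧ x < b => hxi hh) with h1 | h1
          · linarith [hx.1, not_lt.mp h1]
          · exact le_antisymm hxI.2 (not_lt.mp h1)
        rw [hxb]
        have hxsb : xstar < b := hx.2
        have hIooInt2 : Ioo xstar b ⊆ interior I := by
          rw [h, interior_Icc]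
          exact fun t ht => ⟨lt_trans hx.1 ht.1, ht.2⟩
        have hne : (𝓝[Ioo xstar b] b).NeBot := by
          apply mem_closure_iff_nhdsWithin_neBot.mp
          rw [closure_Ioo (ne_of_lt hxsb)]
          exact ⟨le_of_lt hxsb, le_refl b⟩
        have hbI : b ∈ I := by rw [h]; exact ⟨le_of_lt hab, le_refl b⟩
        have ht : Tendsto f (𝓝[Ioo xstar b] b) (𝓝 (f b)) :=
          (hfc b hbI).mono_left (nhdsWithin_mono b (fun t htm => interior_subset (hIooInt2 htm)))
        haveI := hne
        exact le_of_tendsto ht (eventually_nhdsWithin_of_forall (fun t htm => by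
          have hprod := hneg t (hIooInt2 htm) (ne_of_gt htm.1)
          by_contra hlt
          push_neg at hlt
          have : (0:ℝ) < (f t - xstar) * (t - xstar) :=
            mul_pos (by linarith) (by linarith [htm.1])
          linarith))
  -- get preimages of c and d in [c,d]
  obtain ⟨α, hα, hfα⟩ := hcov (left_mem_Icc.mpr (le_of_lt hcd))
  obtain ⟨β, hβ, hfβ⟩ := hcov (right_mem_Icc.mpr (le_of_lt hcd))
  -- fixed point in [c,d], hence xstar ∈ [c,d]
  have hfcd : ContinuousOn f (Icc c d) := hfc.mono hIccI
  have hgcont : ContinuousOn (fun x => f x - x) (Icc c d) := hfcd.sub continuousOn_id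
  have huIcc : uIcc α β ⊆ Icc c d := uIcc_subset_Icc hα hβ
  have hivt := intermediate_value_uIcc (hgcont.mono huIcc)
  have h0mem : (0 : ℝ) ∈ uIcc (f α - α) (f β - β) := by
    apply Set.mem_uIcc.mpr
    left
    constructor
    · rw [hfα]; linarith [hα.1]
    · rw [hfβ]; linarith [hβ.2]
  obtain ⟨z0, hz0m, hz0⟩ := hivt h0mem
  have hz0fix : f z0 = z0 := by dsimp at hz0; linarith
  have hz0x : z0 = xstar := huniq z0 (hIccI (huIcc hz0m)) hz0fix
  have hcx' : c ≤ xstar := hz0x ▸ (huIcc hz0m).1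
  -- c < xstar
  have hcx : c < xstar := by
    rcases eq_or_lt_of_le hcx' with heq | hlt
    · exfalso
      have hdgt : xstar < d := heq ▸ hcd
      have hβle : β ≤ xstar := by
        by_contra hgt
        push_neg at hgt
        have := hle β (hIccI hβ) hgt
        rw [hfβ] at this; linarith
      have hβeq : β = xstar := le_antisymm hβle (heq ▸ hβ.1)
      rw [hβeq, hfix] at hfβ
      linarith
    · exact hlt
  -- α > xstar
  have hpx : xstar < α := by
    rcases lt_trichotomy α xstar with h1 | h1 | h1
    · have := hge α (hIccI hα) h1
      rw [hfα] at this; linarith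
    · rw [h1, hfix] at hfα; linarith
    · exact h1
  -- preimage of α
  obtain ⟨u, hu, hfu⟩ := hcov hα
  have hux : u < xstar := by
    rcases lt_trichotomy u xstar with h1 | h1 | h1
    · exact h1
    · rw [h1, hfix] at hfu; linarith
    · have := hle u (hIccI hu) h1
      rw [hfu] at this; linarith
  -- f (f u) = c ≤ u
  have hffu : f (f u) = c := by rw [hfu, hfα]
  have hau : a ≤ u := hinmem u (hIccI hu)
  have hIau : Icc a u ⊆ I := by
    rcases hI with h | ⟨b, hab, h⟩
    · rw [h]; exact fun t ht => ht.1
    · rw [h]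
      have hub : u ≤ b := by
        have := hIccI hu; rw [h] at this; exact this.2
      exact fun t ht => ⟨ht.1, le_trans ht.2 hub⟩
  -- IVT for f∘f - id on [a,u]
  have h2c : ContinuousOn (fun x => f (f x) - x) (Icc a u) :=
    ((hfc.comp hfc hmaps).mono hIau).sub continuousOn_id
  have hga : 0 ≤ f (f a) - a := by
    have := hinmem (f (f a)) (hmaps (hmaps haI))
    linarith
  have hgu : f (f u) - u ≤ 0 := by rw [hffu]; linarith [hu.1]
  have huIcc2 : uIcc a u ⊆ Icc a u := by rw [uIcc_of_le hau]
  have hivt2 := intermediate_value_uIcc (h2c.mono huIcc2)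
  have h0mem2 : (0 : ℝ) ∈ uIcc (f (f a) - a) (f (f u) - u) :=
    Set.mem_uIcc.mpr (Or.inr ⟨hgu, hga⟩)
  obtain ⟨z, hzm, hz⟩ := hivt2 h0mem2
  have hzfix : f (f z) = z := by dsimp at hz; linarith
  have hzu : z ≤ u := by
    have := huIcc2 hzm; exact this.2
  have hzI : z ∈ I := hIau (huIcc2 hzm)
  -- z is 2-periodic, orbit doesn't converge to xstar unless z = xstar
  have hiter : ∀ n, f^[2*n] z = z := by
    intro n
    induction n with
    | zero => simp
    | succ k ih =>
      have h2 : f^[2] z = z := by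
        simp only [Function.iterate_succ, Function.iterate_zero, Function.comp_apply, id_eq]
        exact hzfix
      calc f^[2*(k+1)] z = f^[2*k] (f^[2] z) := by
            rw [show 2*(k+1) = 2*k + 2 by ring, Function.iterate_add_apply]
        _ = z := by rw [h2, ih]
  have hmono : Tendsto (fun n : ℕ => 2*n) atTop atTop :=
    tendsto_atTop_atTop_of_monotone (fun m n hmn => by omega) (fun b => ⟨b, by omega⟩)
  have h2n : Tendsto (fun n : ℕ => f^[2*n] z) atTop (𝓝 xstar) :=
    (hattr z hzI).comp hmono
  have hconst : Tendsto (fun _ : ℕ => z) atTop (𝓝 xstar) := by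
    have : (fun n : ℕ => f^[2*n] z) = fun _ : ℕ => z := funext hiter
    rwa [this] at h2n
  have : z = xstar := tendsto_nhds_unique tendsto_const_nhds hconst
  linarith
end

section
/- (Claim (i) in the proof of Theorem 3.3.) Let m ≥ 1, p_j, a_j, δ ∈ (0,∞), and define f(x) := δ^{−1} Σ_{j=1}^m p_j e^{−a_j x}. If max_j a_j / min_j a_j < 3/2, then the Schwarzian derivative of f is negative everywhere: Sf(x) := f'''(x)/f'(x) − (3/2)(f''(x)/f'(x))² < 0 for all x > 0. -/
/- STATEMENT 13 (Claim (i) in the proof of Theorem 3.3): for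
   f(x) = δ⁻¹ Σ_j p_j e^{−a_j x}, if max_j a_j / min_j a_j < 3/2 then the
   Schwarzian derivative Sf(x) = f'''(x)/f'(x) − (3/2)(f''(x)/f'(x))² is
   negative for all x > 0. -/
theorem nicholson_schwarzian_negative
    (m : ℕ) (hm : 1 ≤ m) (p a : Fin m → ℝ) (δ : ℝ)
    (hp : ∀ j, 0 < p j) (ha : ∀ j, 0 < a j) (hδ : 0 < δ)
    (f : ℝ → ℝ) (hf : f = fun x => δ⁻¹ * ∑ j, p j * Real.exp (-(a j) * x))
    (aplus aminus : ℝ)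
    (haplus : IsGreatest (Set.range a) aplus)
    (haminus : IsLeast (Set.range a) aminus)
    (hH1 : aplus / aminus < 3 / 2) :
    ∀ x : ℝ, 0 < x →
      iteratedDeriv 3 f x / deriv f x
        - (3 / 2) * (iteratedDeriv 2 f x / deriv f x) ^ 2 < 0 := by
  have hne : Nonempty (Fin m) := ⟨⟨0, hm⟩⟩
  set S : ℕ → ℝ → ℝ := fun n x => ∑ j, p j * (-(a j)) ^ n * Real.exp (-(a j) * x)
    with hS
  have hderivS : ∀ (n : ℕ) (x : ℝ), HasDerivAt (S n) (S (n + 1) x) x := by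
    intro n x
    apply HasDerivAt.fun_sum
    intro j _
    have h1 : HasDerivAt (fun x : ℝ => -(a j) * x) (-(a j)) x := by
      simpa using (hasDerivAt_id x).const_mul (-(a j))
    have h2 := (h1.exp).const_mul (p j * (-(a j)) ^ n)
    convert h2 using 1
    · rfl
    · ring
  have hiter : ∀ n : ℕ, iteratedDeriv n f = fun x => δ⁻¹ * S n x := by
    intro n
    induction n with
    | zero =>
      funext x
      simp [iteratedDeriv_zero, hf, hS]
    | succ n ih =>
      funext x
      rw [iteratedDeriv_succ, ih]
      exact (((hderivS n x).const_mul δ⁻¹)).deriv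
  intro x _
  have hderivf : deriv f x = δ⁻¹ * S 1 x := by
    rw [← iteratedDeriv_one, hiter 1]
  rw [hderivf, hiter 2, hiter 3]
  have hδinv : (δ : ℝ)⁻¹ ≠ 0 := inv_ne_zero hδ.ne'
  -- positivity facts
  have hc : ∀ j, 0 < p j * Real.exp (-(a j) * x) := fun j =>
    mul_pos (hp j) (Real.exp_pos _)
  have hS1 : S 1 x < 0 := by
    apply Finset.sum_neg
    · intro j _
      have := mul_pos (ha j) (hc j)
      nlinarith [hc j, ha j]
    · exact Finset.univ_nonempty
  -- a_j < (3/2) a_k for all j k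
  have haminuspos : 0 < aminus := by
    obtain ⟨j0, hj0⟩ := haminus.1
    rw [← hj0]; exact ha j0
  have hratio : ∀ j k, a j < 3 / 2 * a k := by
    intro j k
    have h1 : a j ≤ aplus := haplus.2 ⟨j, rfl⟩
    have h2 : aminus ≤ a k := haminus.2 ⟨k, rfl⟩
    have h3 : aplus < 3 / 2 * aminus := by
      rw [div_lt_div_iff₀ haminuspos (by norm_num : (0:ℝ) < 2)] at hH1
      linarith
    linarith
  -- key inequality
  have key : S 3 x * S 1 x < 3 / 2 * (S 2 x) ^ 2 := by
    have e3 : S 3 x = -∑ j, a j ^ 3 * (p j * Real.exp (-(a j) * x)) := by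
      rw [← Finset.sum_neg_distrib]
      apply Finset.sum_congr rfl
      intro j _; ring
    have e1 : S 1 x = -∑ j, a j * (p j * Real.exp (-(a j) * x)) := by
      rw [← Finset.sum_neg_distrib]
      apply Finset.sum_congr rfl
      intro j _; ring
    have e2 : S 2 x = ∑ j, a j ^ 2 * (p j * Real.exp (-(a j) * x)) := by
      apply Finset.sum_congr rfl
      intro j _; ring
    rw [e1, e2, e3, neg_mul_neg, sq, Finset.sum_mul_sum, Finset.sum_mul_sum,
      Finset.mul_sum]
    apply Finset.sum_lt_sum_of_nonempty Finset.univ_nonempty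
    intro j _
    rw [Finset.mul_sum]
    apply Finset.sum_lt_sum_of_nonempty Finset.univ_nonempty
    intro k _
    have hjk := hratio j k
    have hcj := hc j
    have hck := hc k
    have haj := ha j
    have hak := ha k
    nlinarith [mul_pos hcj hck, mul_pos haj hak, mul_pos (mul_pos haj hak) (mul_pos hcj hck), mul_pos (mul_pos (mul_pos haj haj) hak) (mul_pos hcj hck)]
  -- conclude
  rw [mul_div_mul_left _ _ hδinv, mul_div_mul_left _ _ hδinv]
  have hA : S 1 x ≠ 0 := hS1.ne
  have hA2 : (0:ℝ) < (S 1 x) ^ 2 := by positivity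
  have heq : S 3 x / S 1 x - 3 / 2 * (S 2 x / S 1 x) ^ 2
      = (S 3 x * S 1 x - 3 / 2 * (S 2 x) ^ 2) / (S 1 x) ^ 2 := by
    field_simp
  rw [heq]
  exact div_neg_of_neg_of_pos (by linarith) hA2
end

section
/- (Claim (iii) in the proof of Theorem 3.3.) Let m ≥ 1, p_j, a_j, δ ∈ (0,∞) with Σ_j p_j > δ, let K > 0 satisfy Σ_j p_j e^{−a_j K} = δ, set f(x) := δ^{−1} Σ_j p_j e^{−a_j x} and a⁺ := max_j a_j. If ζ > 0 and a⁺K(e^{δζ} − 1) ≤ 1, then (1 − e^{−δζ}) · f(K e^{−δζ}) ≤ (1 − e^{−δζ}) · exp(e^{−δζ}) < 1; in particular θ := K e^{−δζ} satisfies (1 − e^{−δζ})f(θ) < 1. -/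
/- STATEMENT 15 (Claim (iii) in the proof of Theorem 3.3): with Σ_j p_j > δ,
   K > 0 the positive equilibrium, f(x) = δ⁻¹ Σ_j p_j e^{−a_j x}, a⁺ := max_j a_j,
   ζ > 0 and a⁺K(e^{δζ} − 1) ≤ 1, one has
   (1 − e^{−δζ}) f(K e^{−δζ}) ≤ (1 − e^{−δζ}) exp(e^{−δζ}) < 1;
   in particular θ := K e^{−δζ} satisfies (1 − e^{−δζ}) f(θ) < 1. -/
theorem nicholson_theta_bound
    (m : ℕ) (hm : 1 ≤ m) (p a : Fin m → ℝ) (δ : ℝ)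
    (hp : ∀ j, 0 < p j) (ha : ∀ j, 0 < a j) (hδ : 0 < δ)
    (hpδ : δ < ∑ j, p j)
    (K : ℝ) (hK0 : 0 < K) (hK : ∑ j, p j * Real.exp (-(a j) * K) = δ)
    (f : ℝ → ℝ) (hf : f = fun x => δ⁻¹ * ∑ j, p j * Real.exp (-(a j) * x))
    (aplus : ℝ) (haplus : IsGreatest (Set.range a) aplus)
    (ζ : ℝ) (hζ : 0 < ζ)
    (hH2 : aplus * K * (Real.exp (δ * ζ) - 1) ≤ 1) :
    (1 - Real.exp (-(δ * ζ))) * f (K * Real.exp (-(δ * ζ))) ≤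
      (1 - Real.exp (-(δ * ζ))) * Real.exp (Real.exp (-(δ * ζ))) ∧
    (1 - Real.exp (-(δ * ζ))) * Real.exp (Real.exp (-(δ * ζ))) < 1 ∧
    (1 - Real.exp (-(δ * ζ))) * f (K * Real.exp (-(δ * ζ))) < 1 := by
  set u : ℝ := Real.exp (-(δ * ζ)) with hu
  have hu0 : 0 < u := Real.exp_pos _
  have hδζ : 0 < δ * ζ := mul_pos hδ hζ
  have hu1 : u < 1 := by
    rw [hu]
    exact Real.exp_lt_one_iff.mpr (by linarith)
  -- u * e^{δζ} = 1
  have huE : u * Real.exp (δ * ζ) = 1 := by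
    rw [hu, ← Real.exp_add]; simp
  have honeu : 1 - u = u * (Real.exp (δ * ζ) - 1) := by
    rw [mul_sub, huE]; ring
  -- a⁺ K (1-u) ≤ u
  have hkey : aplus * K * (1 - u) ≤ u := by
    rw [honeu]
    calc aplus * K * (u * (Real.exp (δ * ζ) - 1))
        = (aplus * K * (Real.exp (δ * ζ) - 1)) * u := by ring
      _ ≤ 1 * u := by
          apply mul_le_mul_of_nonneg_right hH2 hu0.le
      _ = u := one_mul u
  -- f (K u) ≤ exp u
  have hfb : f (K * u) ≤ Real.exp u := by
    rw [hf]
    simp only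
    have hsum : ∑ j, p j * Real.exp (-(a j) * (K * u)) ≤ Real.exp u * δ := by
      rw [← hK, Finset.mul_sum]
      apply Finset.sum_le_sum
      intro j _
      rw [show Real.exp u * (p j * Real.exp (-(a j) * K)) =
            p j * (Real.exp u * Real.exp (-(a j) * K)) by ring]
      apply mul_le_mul_of_nonneg_left _ (hp j).le
      rw [← Real.exp_add]
      apply Real.exp_le_exp.mpr
      have haj : a j ≤ aplus := haplus.2 ⟨j, rfl⟩
      have h1 : a j * K * (1 - u) ≤ aplus * K * (1 - u) := by
        apply mul_le_mul_of_nonneg_right _ (by linarith)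
        exact mul_le_mul_of_nonneg_right haj hK0.le
      nlinarith
    calc δ⁻¹ * ∑ j, p j * Real.exp (-(a j) * (K * u)) ≤ δ⁻¹ * (Real.exp u * δ) :=
          mul_le_mul_of_nonneg_left hsum (inv_nonneg.mpr hδ.le)
      _ = Real.exp u := by field_simp
  have h2 : (1 - u) * Real.exp u < 1 := by
    have hlt := Real.add_one_lt_exp (x := -u) (neg_ne_zero.mpr hu0.ne')
    have hmul : Real.exp (-u) * Real.exp u = 1 := by
      rw [← Real.exp_add]; simp
    calc (1 - u) * Real.exp u < Real.exp (-u) * Real.exp u :=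
          mul_lt_mul_of_pos_right (by linarith) (Real.exp_pos u)
      _ = 1 := hmul
  have h1 : (1 - u) * f (K * u) ≤ (1 - u) * Real.exp u :=
    mul_le_mul_of_nonneg_left hfb (by linarith)
  exact ⟨h1, h2, lt_of_le_of_lt h1 h2⟩
end

section
/- (Step 3 in the proof of Theorem 3.1.) Let p > δ > 0, a > 0, K := (1/a) log(p/δ), and f(x) := (p/δ) e^{−ax}. If ζ > 0 and (e^{δζ} − 1)·log(p/δ) ≤ 1, then f(x) < 1/(1 − e^{−δζ}) for every x ≥ θ, where θ := K e^{−δζ}. -/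
/- STATEMENT 16 (Step 3 in the proof of Theorem 3.1): with p > δ > 0, a > 0,
   K := (1/a) log(p/δ), f(x) := (p/δ) e^{−ax}, if ζ > 0 and
   (e^{δζ} − 1) log(p/δ) ≤ 1, then f(x) < 1/(1 − e^{−δζ}) for all x ≥ θ,
   where θ := K e^{−δζ}. -/
theorem nicholson_one_pair_f_bound
    (p a δ : ℝ) (hδ : 0 < δ) (hpδ : δ < p) (ha : 0 < a)
    (K : ℝ) (hKdef : K = (1 / a) * Real.log (p / δ))
    (f : ℝ → ℝ) (hf : f = fun x => (p / δ) * Real.exp (-a * x))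
    (ζ : ℝ) (hζ : 0 < ζ)
    (hcond : (Real.exp (δ * ζ) - 1) * Real.log (p / δ) ≤ 1)
    (θ : ℝ) (hθ : θ = K * Real.exp (-(δ * ζ))) :
    ∀ x : ℝ, θ ≤ x → f x < 1 / (1 - Real.exp (-(δ * ζ))) := by
  intro x hx
  subst hf hKdef hθ
  set L := Real.log (p / δ) with hL
  set u := Real.exp (-(δ * ζ)) with hu
  have hpd : (1 : ℝ) < p / δ := (one_lt_div hδ).mpr hpδ
  have hL0 : 0 < L := Real.log_pos hpd
  have hu0 : 0 < u := Real.exp_pos _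
  have hu1 : u < 1 := by
    rw [hu, Real.exp_lt_one_iff]
    nlinarith
  have huinv : Real.exp (δ * ζ) = 1 / u := by
    rw [hu, one_div, ← Real.exp_neg, neg_neg]
  -- from hcond : (1/u - 1) L ≤ 1, get L (1 - u) ≤ u
  have hkey : L * (1 - u) ≤ u := by
    rw [huinv] at hcond
    have := mul_le_mul_of_nonneg_left hcond hu0.le
    field_simp at this
    nlinarith
  have hpde : p / δ = Real.exp L := by
    rw [hL, Real.exp_log (by linarith)]
  have hfx : (p / δ) * Real.exp (-a * x) ≤ Real.exp (L * (1 - u)) := by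
    rw [hpde, ← Real.exp_add]
    apply Real.exp_le_exp.mpr
    have haθ : a * (1 / a * L * u) = L * u := by field_simp
    have : -a * x ≤ -a * (1 / a * L * u) := by nlinarith
    nlinarith
  have h2 : Real.exp (L * (1 - u)) ≤ Real.exp u :=
    Real.exp_le_exp.mpr hkey
  have h3 : Real.exp u < 1 / (1 - u) := by
    have h4 : 1 - u < Real.exp (-u) := by
      have := Real.add_one_lt_exp (x := -u) (by nlinarith)
      linarith
    have h5 : (1 - u) * Real.exp u < 1 := by
      have := mul_lt_mul_of_pos_right h4 (Real.exp_pos u)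
      rw [← Real.exp_add] at this
      simpa using this
    rw [lt_div_iff₀ (by linarith)]
    nlinarith [Real.exp_pos u]
  simp only []
  calc (p / δ) * Real.exp (-a * x) ≤ Real.exp (L * (1 - u)) := hfx
    _ ≤ Real.exp u := h2
    _ < 1 / (1 - u) := h3
end

section
/- Let p > δ > 0, a > 0, K := (1/a) log(p/δ), f(x) := (p/δ) e^{−ax}, ζ > 0, μ := 1 − e^{−δζ}, θ := K e^{−δζ}. Assume μ f(x) < 1 for all x ≥ θ, and define h(x) := θ/(1 − μ f(x)) for x ≥ θ. Then h(K) = K, and (h(x) − K)(x − K) < 0 for every x ≥ θ with x ≠ K. -/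
/- STATEMENT 17: with p > δ > 0, a > 0, K := (1/a) log(p/δ), f(x) := (p/δ)e^{−ax},
   ζ > 0, μ := 1 − e^{−δζ}, θ := K e^{−δζ}, if μ f(x) < 1 for all x ≥ θ and
   h(x) := θ/(1 − μ f(x)), then h(K) = K and (h(x) − K)(x − K) < 0 for every
   x ≥ θ with x ≠ K. -/
theorem nicholson_one_pair_h_properties
    (p a δ : ℝ) (hδ : 0 < δ) (hpδ : δ < p) (ha : 0 < a)
    (K : ℝ) (hKdef : K = (1 / a) * Real.log (p / δ))
    (f : ℝ → ℝ) (hf : f = fun x => (p / δ) * Real.exp (-a * x))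
    (ζ : ℝ) (hζ : 0 < ζ)
    (μ : ℝ) (hμ : μ = 1 - Real.exp (-(δ * ζ)))
    (θ : ℝ) (hθ : θ = K * Real.exp (-(δ * ζ)))
    (hwd : ∀ x : ℝ, θ ≤ x → μ * f x < 1)
    (h : ℝ → ℝ) (hh : h = fun x => θ / (1 - μ * f x)) :
    h K = K ∧ ∀ x : ℝ, θ ≤ x → x ≠ K → (h x - K) * (x - K) < 0 := by
  set E := Real.exp (-(δ * ζ)) with hE
  have hE0 : 0 < E := Real.exp_pos _
  have hE1 : E < 1 := by
    rw [hE]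
    have : -(δ * ζ) < 0 := by nlinarith
    exact Real.exp_lt_one_iff.mpr this
  have hr : 1 < p / δ := (one_lt_div hδ).2 hpδ
  have hr0 : 0 < p / δ := lt_trans one_pos hr
  have hK0 : 0 < K := by
    rw [hKdef]
    have := Real.log_pos hr
    positivity
  have hθ0 : 0 < θ := by rw [hθ]; positivity
  have hμ0 : 0 < μ := by rw [hμ]; linarith
  have hμE : 1 - μ = E := by rw [hμ]; ring
  have fK : f K = 1 := by
    rw [hf]
    simp only
    have haK : -a * K = -Real.log (p / δ) := by
      rw [hKdef]; field_simp
    rw [haK, Real.exp_neg, Real.exp_log hr0]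
    exact mul_inv_cancel₀ (ne_of_gt hr0)
  have hKval : θ / E = K := by rw [hθ]; field_simp
  have h1 : h K = K := by
    rw [hh]; simp only [fK, mul_one, hμE, hKval]
  refine ⟨h1, fun x hx hxne => ?_⟩
  have hwdx := hwd x hx
  have hden0 : 0 < 1 - μ * f x := by linarith
  have hfx : f x = (p / δ) * Real.exp (-a * x) := by rw [hf]
  have hhx : h x = θ / (1 - μ * f x) := by rw [hh]
  rcases lt_or_gt_of_ne hxne with hlt | hgt
  · -- x < K : f x > 1
    have hfgt : 1 < f x := by
      rw [← fK, hf]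
      simp only
      have : Real.exp (-a * K) < Real.exp (-a * x) := by
        apply Real.exp_lt_exp.mpr; nlinarith
      nlinarith
    have hdlt : 1 - μ * f x < E := by
      have : μ < μ * f x := by nlinarith
      rw [← hμE]; linarith
    have : θ / E < θ / (1 - μ * f x) :=
      div_lt_div_of_pos_left hθ0 hden0 hdlt
    rw [hKval] at this
    rw [hhx]
    apply mul_neg_of_pos_of_neg <;> linarith
  · -- x > K : f x < 1
    have hflt : f x < 1 := by
      rw [← fK, hf]
      simp only
      have : Real.exp (-a * x) < Real.exp (-a * K) := by
        apply Real.exp_lt_exp.mpr; nlinarith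
      nlinarith
    have hfpos : 0 < f x := by rw [hfx]; positivity
    have hdgt : E < 1 - μ * f x := by
      have : μ * f x < μ := by nlinarith
      rw [← hμE]; linarith
    have : θ / (1 - μ * f x) < θ / E :=
      div_lt_div_of_pos_left hθ0 hE0 hdgt
    rw [hKval] at this
    rw [hhx]
    apply mul_neg_of_neg_of_pos <;> linarith
end

section
/- (Case 1 in the proofs of Theorems 3.1 and 3.3.) Assume p := Σ_{j=1}^m p_j > δ and let K > 0 satisfy Σ_j p_j e^{−a_j K} = δ. If x is a solution of the Nicholson equation with admissible initial data such that lim_{t→∞} x(t) = C exists with C > 0, then C = K. -/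
/- STATEMENT 18 (Case 1 in the proofs of Theorems 3.1 and 3.3): if p := Σ_j p_j > δ,
   K > 0 is the positive equilibrium, and x is a solution with admissible initial
   data such that lim_{t→∞} x(t) = C exists with C > 0, then C = K. -/
theorem nicholson_convergent_solution_limit_is_K
    (m : ℕ) (hm : 1 ≤ m) (p a : Fin m → ℝ)
    (hp : ∀ j, 0 < p j) (ha : ∀ j, 0 < a j) (δ : ℝ) (hδ : 0 < δ)
    (t₀ : ℝ) (β : ℝ → ℝ) (τ σ : Fin m → ℝ → ℝ)
    (hβc : ContinuousOn β (Set.Ici t₀))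
    (hτc : ∀ j, ContinuousOn (τ j) (Set.Ici t₀))
    (hσc : ∀ j, ContinuousOn (σ j) (Set.Ici t₀))
    (hτ0 : ∀ j, ∀ t ∈ Set.Ici t₀, 0 ≤ τ j t)
    (hσ0 : ∀ j, ∀ t ∈ Set.Ici t₀, 0 ≤ σ j t)
    (βminus : ℝ) (hβminus : IsGLB (β '' Set.Ici t₀) βminus) (hβmpos : 0 < βminus)
    (hβub : ∃ B, ∀ t ∈ Set.Ici t₀, β t ≤ B)
    (τbar : ℝ)
    (hτbar : IsLUB ((⋃ j, τ j '' Set.Ici t₀) ∪ ⋃ j, σ j '' Set.Ici t₀) τbar)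
    (hpδ : δ < ∑ j, p j)
    (K : ℝ) (hK0 : 0 < K) (hK : ∑ j, p j * Real.exp (-(a j) * K) = δ)
    (x : ℝ → ℝ) (hx : NicholsonSolution m p a δ t₀ τbar β τ σ x)
    (C : ℝ) (hC : 0 < C) (hlim : Filter.Tendsto x Filter.atTop (nhds C)) :
    C = K := by
  obtain ⟨hxc, hxd, hxinit, hxt0⟩ := hx
  haveI : Nonempty (Fin m) := Fin.pos_iff_nonempty.mp hm
  have hFm : (Finset.univ : Finset (Fin m)).Nonempty := Finset.univ_nonempty
  -- bounds on delays
  have hτb : ∀ j, ∀ t ∈ Set.Ici t₀, τ j t ≤ τbar := fun j t ht =>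
    hτbar.1 (Or.inl (Set.mem_iUnion.2 ⟨j, ⟨t, ht, rfl⟩⟩))
  have hσb : ∀ j, ∀ t ∈ Set.Ici t₀, σ j t ≤ τbar := fun j t ht =>
    hτbar.1 (Or.inr (Set.mem_iUnion.2 ⟨j, ⟨t, ht, rfl⟩⟩))
  have hτbar0 : 0 ≤ τbar := le_trans (hτ0 (Classical.arbitrary _) t₀ Set.self_mem_Ici)
    (hτb (Classical.arbitrary _) t₀ Set.self_mem_Ici)
  -- delayed arguments tend to atTop
  have hbase : Filter.Tendsto (fun t : ℝ => t - τbar) Filter.atTop Filter.atTop := by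
    simpa [sub_eq_add_neg] using
      Filter.tendsto_atTop_add_const_right Filter.atTop (-τbar) Filter.tendsto_id
  have hdelτ : ∀ j, Filter.Tendsto (fun t => t - τ j t) Filter.atTop Filter.atTop := fun j =>
    Filter.tendsto_atTop_mono' _ ((Filter.eventually_ge_atTop t₀).mono fun t ht => by
      have := hτb j t ht; simp only []; linarith) hbase
  have hdelσ : ∀ j, Filter.Tendsto (fun t => t - σ j t) Filter.atTop Filter.atTop := fun j =>
    Filter.tendsto_atTop_mono' _ ((Filter.eventually_ge_atTop t₀).mono fun t ht => by
      have := hσb j t ht; simp only []; linarith) hbase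
  have hxτ : ∀ j, Filter.Tendsto (fun t => x (t - τ j t)) Filter.atTop (nhds C) := fun j =>
    hlim.comp (hdelτ j)
  have hxσ : ∀ j, Filter.Tendsto (fun t => x (t - σ j t)) Filter.atTop (nhds C) := fun j =>
    hlim.comp (hdelσ j)
  set F : ℝ → ℝ := fun t =>
    (∑ j, p j * x (t - τ j t) * Real.exp (-(a j) * x (t - σ j t))) - δ * x t with hFdef
  set L : ℝ := (∑ j, p j * C * Real.exp (-(a j) * C)) - δ * C with hLdef
  have hF : Filter.Tendsto F Filter.atTop (nhds L) := by
    refine Filter.Tendsto.sub ?_ (hlim.const_mul δ)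
    refine tendsto_finset_sum _ fun j _ => ?_
    exact ((hxτ j).const_mul (p j)).mul
      ((Real.continuous_exp.tendsto _).comp ((hxσ j).const_mul (-(a j))))
  have hβlb : ∀ t ∈ Set.Ici t₀, βminus ≤ β t := fun t ht => hβminus.1 ⟨t, ht, rfl⟩
  have hxd' : ∀ t ∈ Set.Ici t₀, HasDerivWithinAt x (β t * F t) (Set.Ici t₀) t := hxd
  clear_value F L
  have hL0 : L = 0 := by
    by_contra hne
    rcases lt_or_gt_of_ne hne with hneg | hpos
    · -- L < 0 : x'(t) ≤ -ε eventually, x → -∞, contradiction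
      set ε : ℝ := βminus * (-(L / 2)) with hεdef
      have hε : 0 < ε := mul_pos hβmpos (by linarith)
      have hev : ∀ᶠ t in Filter.atTop, F t ≤ L / 2 :=
        hF.eventually (eventually_le_nhds (by linarith))
      obtain ⟨T, hT⟩ := Filter.eventually_atTop.mp (hev.and (Filter.eventually_ge_atTop t₀))
      set T' : ℝ := max T t₀ with hT'def
      have hT't₀ : t₀ ≤ T' := le_max_right _ _
      have hder : ∀ t, T' < t → β t * F t ≤ -ε := by
        intro t ht
        have h1 : t₀ ≤ t := le_trans hT't₀ ht.le
        obtain ⟨hFt, -⟩ := hT t (le_trans (le_max_left _ _) ht.le)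
        have hβ := hβlb t h1
        have h2 : β t * F t ≤ βminus * F t :=
          mul_le_mul_of_nonpos_right hβ (by linarith)
        have h3 : βminus * F t ≤ βminus * (L / 2) :=
          mul_le_mul_of_nonneg_left hFt hβmpos.le
        have : βminus * (L / 2) = -ε := by rw [hεdef]; ring
        linarith
      have hanti : AntitoneOn (fun t => x t + ε * t) (Set.Ici T') := by
        apply antitoneOn_of_hasDerivWithinAt_nonpos (convex_Ici T')
        · refine ContinuousOn.add (hxc.mono ?_)
            (continuous_const.mul continuous_id).continuousOn
          exact Set.Ici_subset_Ici.2 (by linarith)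
        · intro t ht
          rw [interior_Ici] at ht
          have h1 : t₀ ≤ t := le_trans hT't₀ (le_of_lt ht)
          have hεid : HasDerivAt (fun y => ε * y) ε t := by
            simpa using (hasDerivAt_id t).const_mul ε
          exact ((hxd' t h1).add hεid.hasDerivWithinAt).mono
            (by rw [interior_Ici]; exact fun s hs => le_trans hT't₀ (le_of_lt hs))
        · intro t ht
          rw [interior_Ici] at ht
          have := hder t ht
          linarith
      have hbound : ∀ t, T' ≤ t → x t ≤ (x T' + ε * T') + -(ε * t) := by
        intro t ht
        have := hanti (Set.self_mem_Ici) ht ht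
        simp only at this; linarith
      have hbot : Filter.Tendsto x Filter.atTop Filter.atBot := by
        apply Filter.tendsto_atBot_mono' _
          ((Filter.eventually_ge_atTop T').mono fun t ht => hbound t ht)
        apply Filter.tendsto_atBot_add_const_left
        exact Filter.tendsto_neg_atTop_atBot.comp
          (Filter.Tendsto.const_mul_atTop hε Filter.tendsto_id)
      exact not_tendsto_atBot_of_tendsto_nhds hlim hbot
    · -- L > 0 : x'(t) ≥ ε eventually, x → ∞, contradiction
      set ε : ℝ := βminus * (L / 2) with hεdef
      have hε : 0 < ε := mul_pos hβmpos (by linarith)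
      have hev : ∀ᶠ t in Filter.atTop, L / 2 ≤ F t :=
        hF.eventually (eventually_ge_nhds (by linarith))
      obtain ⟨T, hT⟩ := Filter.eventually_atTop.mp (hev.and (Filter.eventually_ge_atTop t₀))
      set T' : ℝ := max T t₀ with hT'def
      have hT't₀ : t₀ ≤ T' := le_max_right _ _
      have hder : ∀ t, T' < t → ε ≤ β t * F t := by
        intro t ht
        have h1 : t₀ ≤ t := le_trans hT't₀ ht.le
        obtain ⟨hFt, -⟩ := hT t (le_trans (le_max_left _ _) ht.le)
        have hβ := hβlb t h1
        calc ε = βminus * (L / 2) := rfl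
          _ ≤ β t * F t := mul_le_mul hβ hFt (by linarith) (by linarith)
      have hmono : MonotoneOn (fun t => x t - ε * t) (Set.Ici T') := by
        apply monotoneOn_of_hasDerivWithinAt_nonneg (convex_Ici T')
        · refine ContinuousOn.sub (hxc.mono ?_)
            (continuous_const.mul continuous_id).continuousOn
          exact Set.Ici_subset_Ici.2 (by linarith)
        · intro t ht
          rw [interior_Ici] at ht
          have h1 : t₀ ≤ t := le_trans hT't₀ (le_of_lt ht)
          have hεid : HasDerivAt (fun y => ε * y) ε t := by
            simpa using (hasDerivAt_id t).const_mul ε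
          exact ((hxd' t h1).sub hεid.hasDerivWithinAt).mono
            (by rw [interior_Ici]; exact fun s hs => le_trans hT't₀ (le_of_lt hs))
        · intro t ht
          rw [interior_Ici] at ht
          have := hder t ht
          linarith
      have hbound : ∀ t, T' ≤ t → (x T' - ε * T') + ε * t ≤ x t := by
        intro t ht
        have := hmono (Set.self_mem_Ici) ht ht
        simp only at this; linarith
      have htop : Filter.Tendsto x Filter.atTop Filter.atTop := by
        apply Filter.tendsto_atTop_mono' _
          ((Filter.eventually_ge_atTop T').mono fun t ht => hbound t ht)
        exact Filter.tendsto_atTop_add_const_left _ _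
          (Filter.Tendsto.const_mul_atTop hε Filter.tendsto_id)
      exact not_tendsto_atTop_of_tendsto_nhds hlim htop
  -- from L = 0 deduce ∑ p_j e^{-a_j C} = δ
  have hsum : (∑ j, p j * Real.exp (-(a j) * C)) = δ := by
    have h1 : C * (∑ j, p j * Real.exp (-(a j) * C)) = C * δ := by
      rw [Finset.mul_sum]
      have h2 : (∑ j, C * (p j * Real.exp (-(a j) * C)))
          = ∑ j, p j * C * Real.exp (-(a j) * C) :=
        Finset.sum_congr rfl fun j _ => by ring
      rw [h2]
      have : (∑ j, p j * C * Real.exp (-(a j) * C)) - δ * C = 0 := hLdef ▸ hL0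
      linarith
    exact mul_left_cancel₀ hC.ne' h1
  -- strict monotonicity of s ↦ ∑ p_j e^{-a_j s} forces C = K
  rcases lt_trichotomy C K with h | h | h
  · exfalso
    have : (∑ j, p j * Real.exp (-(a j) * K)) < ∑ j, p j * Real.exp (-(a j) * C) := by
      refine Finset.sum_lt_sum_of_nonempty hFm fun j _ => ?_
      have h1 : -(a j) * K < -(a j) * C := by nlinarith [ha j]
      exact mul_lt_mul_of_pos_left (Real.exp_lt_exp.2 h1) (hp j)
    linarith
  · exact h
  · exfalso
    have : (∑ j, p j * Real.exp (-(a j) * C)) < ∑ j, p j * Real.exp (-(a j) * K) := by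
      refine Finset.sum_lt_sum_of_nonempty hFm fun j _ => ?_
      have h1 : -(a j) * C < -(a j) * K := by nlinarith [ha j]
      exact mul_lt_mul_of_pos_left (Real.exp_lt_exp.2 h1) (hp j)
    linarith
end

section
/- (Step 4 in the proof of Theorem 3.1: monotonicity of j in ζ.) Let p > δ > 0, a > 0, K := (1/a) log(p/δ), f(x) := (p/δ) e^{−ax}, and for ζ > 0 and x > 0 with (1 − e^{−δζ}) f(x) < 1 define j(x, ζ) := (1 − μ)/(1 − μ f(x)) where μ := 1 − e^{−δζ}. Then (x − K) · ∂j/∂ζ(x, ζ) < 0 for every such x ≠ K; consequently ζ ↦ j(x, ζ) is strictly increasing when 0 < x < K and strictly decreasing when x > K (on the domain where (1 − e^{−δζ}) f(x) < 1). -/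
/- STATEMENT 19 (Step 4 in the proof of Theorem 3.1): with p > δ > 0, a > 0,
   K := (1/a) log(p/δ), f(x) := (p/δ) e^{−ax}, and
   j(x, ζ) := (1 − μ)/(1 − μ f(x)) with μ := 1 − e^{−δζ} (so 1 − μ = e^{−δζ}),
   one has (x − K)·∂j/∂ζ(x,ζ) < 0 for all x > 0, ζ > 0 with (1 − e^{−δζ})f(x) < 1
   and x ≠ K; consequently ζ ↦ j(x,ζ) is strictly increasing for 0 < x < K and
   strictly decreasing for x > K, on the domain where (1 − e^{−δζ})f(x) < 1. -/
theorem nicholson_j_monotone_in_zeta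
    (p a δ : ℝ) (hδ : 0 < δ) (hpδ : δ < p) (ha : 0 < a)
    (K : ℝ) (hKdef : K = (1 / a) * Real.log (p / δ))
    (f : ℝ → ℝ) (hf : f = fun x => (p / δ) * Real.exp (-a * x))
    (j : ℝ → ℝ → ℝ)
    (hj : j = fun x ζ =>
      Real.exp (-(δ * ζ)) / (1 - (1 - Real.exp (-(δ * ζ))) * f x)) :
    (∀ x ζ : ℝ, 0 < x → 0 < ζ → (1 - Real.exp (-(δ * ζ))) * f x < 1 → x ≠ K →
      (x - K) * deriv (fun z => j x z) ζ < 0) ∧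
    (∀ x : ℝ, 0 < x → x < K →
      StrictMonoOn (fun z => j x z)
        {ζ : ℝ | 0 < ζ ∧ (1 - Real.exp (-(δ * ζ))) * f x < 1}) ∧
    (∀ x : ℝ, K < x →
      StrictAntiOn (fun z => j x z)
        {ζ : ℝ | 0 < ζ ∧ (1 - Real.exp (-(δ * ζ))) * f x < 1}) := by
  have hpδ' : (1 : ℝ) < p / δ := (one_lt_div hδ).mpr hpδ
  have hfpos : ∀ x : ℝ, 0 < f x := by
    intro x; rw [hf]; exact mul_pos (by linarith) (Real.exp_pos _)
  -- rewrite f x as a single exponential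
  have hfe : ∀ x : ℝ, f x = Real.exp (Real.log (p / δ) + -a * x) := by
    intro x
    rw [hf, Real.exp_add, Real.exp_log (by linarith : (0:ℝ) < p / δ)]
  -- comparison of f x with 1
  have hlt : ∀ x : ℝ, x < K → 1 < f x := by
    intro x hx
    rw [hfe, Real.one_lt_exp_iff]
    rw [hKdef] at hx
    have h := mul_lt_mul_of_pos_left hx ha
    rw [show a * (1 / a * Real.log (p / δ)) = Real.log (p / δ) by field_simp] at h
    linarith
  have hgt : ∀ x : ℝ, K < x → f x < 1 := by
    intro x hx
    rw [hfe, Real.exp_lt_one_iff]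
    rw [hKdef] at hx
    have h := mul_lt_mul_of_pos_left hx ha
    rw [show a * (1 / a * Real.log (p / δ)) = Real.log (p / δ) by field_simp] at h
    linarith
  -- the derivative in ζ
  have key : ∀ x ζ : ℝ, (1 - Real.exp (-(δ * ζ))) * f x < 1 →
      HasDerivAt (fun z => j x z)
        (δ * Real.exp (-(δ * ζ)) * (f x - 1) /
          (1 - (1 - Real.exp (-(δ * ζ))) * f x) ^ 2) ζ := by
    intro x ζ hD
    have hDpos : 0 < 1 - (1 - Real.exp (-(δ * ζ))) * f x := by linarith
    have hu : HasDerivAt (fun z : ℝ => Real.exp (-(δ * z)))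
        (Real.exp (-(δ * ζ)) * -δ) ζ := by
      have h1 : HasDerivAt (fun z : ℝ => -(δ * z)) (-δ) ζ := by
        exact (((hasDerivAt_id ζ).const_mul δ).neg).congr_deriv (by ring)
      exact h1.exp
    have hg : HasDerivAt (fun z : ℝ => 1 - (1 - Real.exp (-(δ * z))) * f x)
        (-(-(Real.exp (-(δ * ζ)) * -δ) * f x)) ζ :=
      ((hu.const_sub 1).mul_const (f x)).const_sub 1
    have := hu.div hg (ne_of_gt hDpos)
    rw [hj]
    exact this.congr_deriv (by ring)
  -- pointwise derivative value
  have hderiv : ∀ x ζ : ℝ, (1 - Real.exp (-(δ * ζ))) * f x < 1 →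
      deriv (fun z => j x z) ζ =
        δ * Real.exp (-(δ * ζ)) * (f x - 1) /
          (1 - (1 - Real.exp (-(δ * ζ))) * f x) ^ 2 := fun x ζ hD =>
    (key x ζ hD).deriv
  -- sign of the derivative
  have hpos : ∀ x ζ : ℝ, x < K → (1 - Real.exp (-(δ * ζ))) * f x < 1 →
      0 < deriv (fun z => j x z) ζ := by
    intro x ζ hx hD
    rw [hderiv x ζ hD]
    have hDpos : 0 < 1 - (1 - Real.exp (-(δ * ζ))) * f x := by linarith
    have h1 := hlt x hx
    apply div_pos
    · have := Real.exp_pos (-(δ * ζ))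
      have := mul_pos (mul_pos hδ (Real.exp_pos (-(δ * ζ)))) (by linarith : (0:ℝ) < f x - 1)
      linarith
    · positivity
  have hneg : ∀ x ζ : ℝ, K < x → (1 - Real.exp (-(δ * ζ))) * f x < 1 →
      deriv (fun z => j x z) ζ < 0 := by
    intro x ζ hx hD
    rw [hderiv x ζ hD]
    have hDpos : 0 < 1 - (1 - Real.exp (-(δ * ζ))) * f x := by linarith
    have h1 := hgt x hx
    apply div_neg_of_neg_of_pos
    · have := mul_neg_of_pos_of_neg (mul_pos hδ (Real.exp_pos (-(δ * ζ))))
        (by linarith : f x - 1 < 0)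
      linarith
    · positivity
  -- domain properties
  have hconv : ∀ x : ℝ,
      Convex ℝ {ζ : ℝ | 0 < ζ ∧ (1 - Real.exp (-(δ * ζ))) * f x < 1} := by
    intro x
    rw [convex_iff_ordConnected]
    constructor
    intro z1 h1 z2 h2 z hz
    refine ⟨lt_of_lt_of_le h1.1 hz.1, lt_of_le_of_lt ?_ h2.2⟩
    apply mul_le_mul_of_nonneg_right _ (le_of_lt (hfpos x))
    have : Real.exp (-(δ * z2)) ≤ Real.exp (-(δ * z)) := by
      apply Real.exp_le_exp.mpr
      nlinarith [hz.2]
    linarith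
  have hopen : ∀ x : ℝ,
      IsOpen {ζ : ℝ | 0 < ζ ∧ (1 - Real.exp (-(δ * ζ))) * f x < 1} := by
    intro x
    have : {ζ : ℝ | 0 < ζ ∧ (1 - Real.exp (-(δ * ζ))) * f x < 1} =
        Set.Ioi 0 ∩ (fun ζ : ℝ => (1 - Real.exp (-(δ * ζ))) * f x) ⁻¹' Set.Iio 1 := rfl
    rw [this]
    exact isOpen_Ioi.inter ((by fun_prop : Continuous
      fun ζ : ℝ => (1 - Real.exp (-(δ * ζ))) * f x).isOpen_preimage _ isOpen_Iio)
  have hcont : ∀ x : ℝ,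
      ContinuousOn (fun z => j x z)
        {ζ : ℝ | 0 < ζ ∧ (1 - Real.exp (-(δ * ζ))) * f x < 1} := by
    intro x ζ hζ
    exact ((key x ζ hζ.2).continuousAt).continuousWithinAt
  refine ⟨?_, ?_, ?_⟩
  · intro x ζ _ _ hD hxK
    rcases lt_or_gt_of_ne hxK with hx | hx
    · have := hpos x ζ hx hD
      nlinarith
    · have := hneg x ζ hx hD
      nlinarith
  · intro x _ hx
    apply strictMonoOn_of_deriv_pos (hconv x) (hcont x)
    intro ζ hζ
    rw [(hopen x).interior_eq] at hζ
    exact hpos x ζ hx hζ.2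
  · intro x hx
    apply strictAntiOn_of_deriv_neg (hconv x) (hcont x)
    intro ζ hζ
    rw [(hopen x).interior_eq] at hζ
    exact hneg x ζ hx hζ.2
end
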